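/- arXiv:2103.10889 — 9 statements merged into one kernel-verified Lean document; each statement's English description precedes it below -/
import Mathlib

section
/- Let p be a prime. For every pair (x, α) ∈ ℝ × ℚ_p there exists a unique f ∈ ℤ[1/p] such that x − f ∈ [−1/2, 1/2) and α − f ∈ ℤ_p; that is, [−1/2, 1/2) × ℤ_p is a fundamental domain for the diagonally embedded ℤ[1/p] in ℝ × ℚ_p. -/
/-- A rational number lies in `ℤ[1/p]`, i.e. has the form `m / p^n` with `m ∈ ℤ`, `n ∈ ℕ`. -/
def InZInvP (p : ℕ) (q : ℚ) : Prop := ∃ (m : ℤ) (n : ℕ), q = (m : ℚ) / (p : ℚ) ^ n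

lemma InZInvP.int_of_norm_le_one {p : ℕ} [Fact p.Prime] {q : ℚ}
    (h : InZInvP p q) (hle : ‖(q : ℚ_[p])‖ ≤ 1) : ∃ z : ℤ, q = (z : ℚ) := by
  obtain ⟨m, n, rfl⟩ := h
  have hp0 : ((p : ℚ) : ℚ_[p]) ≠ 0 := by
    have := (Fact.out : p.Prime).pos
    exact_mod_cast Nat.cast_ne_zero.mpr this.ne'
  have hm : ‖((m : ℚ) : ℚ_[p])‖ ≤ (p : ℝ) ^ (-n : ℤ) := by
    have : ((m : ℚ) : ℚ_[p]) = ((m : ℚ) / (p : ℚ) ^ n : ℚ) * ((p : ℚ) ^ n : ℚ_[p]) := by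
      push_cast
      field_simp
      rw [mul_div_cancel_right₀ _ (pow_ne_zero _ (by exact_mod_cast hp0))]
    rw [this, norm_mul]
    calc ‖(((m : ℚ) / (p : ℚ) ^ n : ℚ) : ℚ_[p])‖ * ‖(((p:ℚ) ^ n : ℚ) : ℚ_[p])‖
        ≤ 1 * ‖(((p:ℚ) ^ n : ℚ) : ℚ_[p])‖ := by
          exact mul_le_mul_of_nonneg_right hle (norm_nonneg _)
      _ = (p : ℝ) ^ (-n : ℤ) := by
          push_cast
          rw [one_mul, norm_pow, Padic.norm_p, zpow_neg, zpow_natCast, inv_pow]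
  have hdvd : (p ^ n : ℤ) ∣ m := by
    rw [← Padic.norm_int_le_pow_iff_dvd]
    exact_mod_cast hm
  obtain ⟨c, rfl⟩ := hdvd
  refine ⟨c, ?_⟩
  have hpn : ((p : ℚ) ^ n) ≠ 0 := by
    have := (Fact.out : p.Prime).pos
    positivity
  field_simp
  push_cast
  ring

lemma InZInvP.sub {p : ℕ} (hp : (p : ℚ) ≠ 0) {a b : ℚ} (ha : InZInvP p a)
    (hb : InZInvP p b) : InZInvP p (a - b) := by
  obtain ⟨m1, n1, rfl⟩ := ha
  obtain ⟨m2, n2, rfl⟩ := hb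
  refine ⟨m1 * p ^ n2 - m2 * p ^ n1, n1 + n2, ?_⟩
  field_simp
  push_cast
  ring

/-- **`[−1/2, 1/2) × ℤ_p` is a fundamental domain for the diagonal embedding of `ℤ[1/p]`
in `ℝ × ℚ_p`:** for every `(x, α) ∈ ℝ × ℚ_p` there is a unique `f ∈ ℚ` with
`x − f ∈ [−1/2, 1/2)` and `α − f ∈ ℤ_p`. -/
theorem fundamental_domain_ZinvP_in_R_times_Qp
    (p : ℕ) [Fact p.Prime] (x : ℝ) (α : ℚ_[p]) :
    ∃! f : ℚ, InZInvP p f ∧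
      x - (f : ℝ) ∈ Set.Ico (-(1/2) : ℝ) (1/2) ∧
      ‖α - (f : ℚ_[p])‖ ≤ 1 := by
  have hp : p.Prime := Fact.out
  have hp1 : (1:ℝ) < p := by exact_mod_cast hp.one_lt
  -- find n with ‖p^n * α‖ ≤ 1
  obtain ⟨n, hn⟩ := exists_nat_ge ‖α‖
  have hlt : (n : ℝ) < (p : ℝ) ^ n := by
    exact_mod_cast Nat.lt_pow_self (n := n) hp.one_lt
  have hβ : ‖(p : ℚ_[p]) ^ n * α‖ ≤ 1 := by
    rw [norm_mul, norm_pow, Padic.norm_p]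
    have hα : ‖α‖ ≤ (p : ℝ) ^ n := hn.trans hlt.le
    have hpn : (0:ℝ) < (p:ℝ) ^ n := by positivity
    rw [inv_pow, ← le_div_iff₀' (by positivity)]
    simpa [div_eq_mul_inv] using hα
  set β : ℤ_[p] := ⟨(p : ℚ_[p]) ^ n * α, hβ⟩ with hβdef
  obtain ⟨c, hc⟩ := Ideal.mem_span_singleton'.mp (β.appr_spec n)
  set m : ℕ := β.appr n
  -- c * p^n = β - m  in ℤ_p; pass to ℚ_p
  have hc' : (c : ℚ_[p]) * (p : ℚ_[p]) ^ n = (p : ℚ_[p]) ^ n * α - (m : ℚ_[p]) := by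
    have := congrArg (PadicInt.Coe.ringHom (p := p)) hc
    push_cast at this ⊢
    exact this
  have hppos : (0:ℚ) < (p:ℚ) ^ n := by
    have : (0:ℚ) < (p:ℚ) := by exact_mod_cast hp.pos
    positivity
  set r : ℚ := (m : ℚ) / (p : ℚ) ^ n with hr
  have hαr : α - (r : ℚ_[p]) = (c : ℚ_[p]) := by
    have hpn0 : ((p : ℚ_[p]) ^ n) ≠ 0 := by
      have : (p : ℚ_[p]) ≠ 0 := by exact_mod_cast (Nat.cast_ne_zero (R := ℚ_[p])).mpr hp.pos.ne'
      exact pow_ne_zero _ this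
    have : ((r : ℚ) : ℚ_[p]) = (m : ℚ_[p]) / (p : ℚ_[p]) ^ n := by
      rw [hr]; push_cast; ring
    rw [this]
    field_simp
    linear_combination -hc'
  have hαr_norm : ‖α - (r : ℚ_[p])‖ ≤ 1 := by rw [hαr]; exact c.norm_le_one
  set k : ℤ := ⌊x - (r : ℝ) + 1/2⌋ with hk
  have hk1 : (k : ℝ) ≤ x - (r : ℝ) + 1/2 := by rw [hk]; exact Int.floor_le _
  have hk2 : x - (r : ℝ) + 1/2 < (k : ℝ) + 1 := by rw [hk]; exact Int.lt_floor_add_one _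
  have hfeq : ∀ q : ℚ, ((q : ℚ) : ℝ) = (q : ℝ) := fun q => rfl
  have hrk : (r + (k:ℚ)) * (p:ℚ) ^ n = ((m:ℤ) + k * p ^ n : ℤ) := by
    rw [hr]; push_cast; field_simp
  refine ⟨r + k, ⟨⟨(m : ℤ) + k * p ^ n, n, by
    rw [eq_div_iff hppos.ne']; exact_mod_cast hrk⟩, ?_, ?_⟩, ?_⟩
  · constructor
    · push_cast; linarith
    · push_cast; linarith
  · have : α - ((r + (k:ℚ) : ℚ) : ℚ_[p]) = (α - (r : ℚ_[p])) + (-(k : ℚ_[p])) := by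
      push_cast; ring
    rw [this]
    refine (Padic.nonarchimedean _ _).trans (max_le hαr_norm ?_)
    rw [norm_neg]
    exact Padic.norm_int_le_one k
  · rintro g ⟨hg1, ⟨hg2, hg3⟩, hg4⟩
    have hf1 : InZInvP p (r + k) := ⟨(m : ℤ) + k * p ^ n, n, by
      rw [eq_div_iff hppos.ne']; exact_mod_cast hrk⟩
    have hpq : (p : ℚ) ≠ 0 := by exact_mod_cast hp.pos.ne'
    have hd : InZInvP p (g - (r + k)) := InZInvP.sub hpq hg1 hf1
    have hdnorm : ‖((g - (r + (k:ℚ)) : ℚ) : ℚ_[p])‖ ≤ 1 := by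
      have : ((g - (r + (k:ℚ)) : ℚ) : ℚ_[p]) =
          (α - ((r + (k:ℚ) : ℚ) : ℚ_[p])) + (-(α - (g : ℚ_[p]))) := by push_cast; ring
      rw [this]
      refine (Padic.nonarchimedean _ _).trans (max_le ?_ ?_)
      · have : α - ((r + (k:ℚ) : ℚ) : ℚ_[p]) = (α - (r : ℚ_[p])) + (-(k : ℚ_[p])) := by
          push_cast; ring
        rw [this]
        exact (Padic.nonarchimedean _ _).trans
          (max_le hαr_norm (by rw [norm_neg]; exact Padic.norm_int_le_one k))
      · rw [norm_neg]; exact hg4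
    obtain ⟨z, hz⟩ := hd.int_of_norm_le_one hdnorm
    -- real bounds
    have hf2 : -(1/2:ℝ) ≤ x - ((r + (k:ℚ) : ℚ) : ℝ) := by push_cast; linarith
    have hf3 : x - ((r + (k:ℚ) : ℚ) : ℝ) < 1/2 := by push_cast; linarith
    have hzr : |((z : ℚ) : ℝ)| < 1 := by
      have : ((g : ℝ) - ((r + (k:ℚ) : ℚ) : ℝ)) = ((z:ℚ) : ℝ) := by exact_mod_cast congrArg (fun q : ℚ => (q : ℝ)) hz
      rw [abs_lt, ← this]
      push_cast at hg2 hg3 hf2 hf3 ⊢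
      constructor <;> linarith
    have hz0 : z = 0 := by
      have h1 : |(z:ℝ)| < 1 := by exact_mod_cast hzr
      have h2 : |z| < 1 := by exact_mod_cast h1
      rw [abs_lt] at h2; omega
    have : g - (r + (k:ℚ)) = 0 := by rw [hz, hz0]; simp
    linarith [this]
end

section
/- Let p be a prime and let D_∞ ⊆ SL₂(ℝ) be a fundamental domain for SL₂(ℤ), i.e. a set such that for every g ∈ SL₂(ℝ) there exists a unique γ ∈ SL₂(ℤ) with gγ ∈ D_∞. Then for every pair (g_∞, g_p) ∈ SL₂(ℝ) × SL₂(ℚ_p) there exists a unique γ ∈ SL₂(ℤ[1/p]) such that g_∞·γ ∈ D_∞ (viewing γ as a real matrix) and g_p·γ ∈ SL₂(ℤ_p) (viewing γ as a p-adic matrix); that is, D_∞ × SL₂(ℤ_p) is a fundamental domain for the diagonally embedded SL₂(ℤ[1/p]) in SL₂(ℝ) × SL₂(ℚ_p). -/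
set_option linter.unusedSectionVars false
set_option linter.unusedTactic false
set_option maxHeartbeats 1000000
open Matrix


/-- A matrix in `SL₂(ℚ)` has all its entries in `ℤ[1/p]`. -/
def SLEntriesInZInvP (p : ℕ) (γ : Matrix.SpecialLinearGroup (Fin 2) ℚ) : Prop :=
  ∀ i j, InZInvP p ((γ : Matrix (Fin 2) (Fin 2) ℚ) i j)


abbrev SL2 (R : Type*) [CommRing R] := Matrix.SpecialLinearGroup (Fin 2) R

namespace ZIP
variable {p : ℕ} [hp : Fact p.Prime]

variable {p : ℕ} [hp : Fact p.Prime]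

lemma pQ_ne : ((p:ℚ)) ≠ 0 := by exact_mod_cast hp.out.ne_zero

lemma zero : InZInvP p 0 := ⟨0, 0, by simp⟩
lemma one : InZInvP p 1 := ⟨1, 0, by simp⟩
lemma intCast (z : ℤ) : InZInvP p (z : ℚ) := ⟨z, 0, by simp⟩

lemma add {a b : ℚ} (ha : InZInvP p a) (hb : InZInvP p b) : InZInvP p (a + b) := by
  obtain ⟨m1, n1, rfl⟩ := ha; obtain ⟨m2, n2, rfl⟩ := hb
  refine ⟨m1 * p ^ n2 + m2 * p ^ n1, n1 + n2, ?_⟩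
  have h1 : ((p:ℚ))^n1 ≠ 0 := pow_ne_zero _ pQ_ne
  have h2 : ((p:ℚ))^n2 ≠ 0 := pow_ne_zero _ pQ_ne
  rw [div_add_div _ _ h1 h2, pow_add]
  push_cast
  ring

lemma neg {a : ℚ} (ha : InZInvP p a) : InZInvP p (-a) := by
  obtain ⟨m, n, rfl⟩ := ha; exact ⟨-m, n, by push_cast; ring⟩

lemma mul {a b : ℚ} (ha : InZInvP p a) (hb : InZInvP p b) : InZInvP p (a * b) := by
  obtain ⟨m1, n1, rfl⟩ := ha; obtain ⟨m2, n2, rfl⟩ := hb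
  refine ⟨m1 * m2, n1 + n2, ?_⟩
  rw [div_mul_div_comm, pow_add]
  push_cast
  ring

lemma zpow (n : ℤ) : InZInvP p ((p : ℚ) ^ n) := by
  rcases le_or_gt 0 n with h | h
  · lift n to ℕ using h
    exact ⟨(p:ℤ) ^ n, 0, by push_cast; simp⟩
  · refine ⟨1, (-n).toNat, ?_⟩
    have h0 : (((-n).toNat : ℕ) : ℤ) = -n := Int.toNat_of_nonneg (by omega)
    rw [← zpow_natCast ((p:ℚ)) (-n).toNat, h0, _root_.zpow_neg]
    simp

/-- density of ℤ[1/p] in ℚ_p -/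
lemma dense (x : ℚ_[p]) (n : ℤ) : ∃ q : ℚ, InZInvP p q ∧ ‖x - (q : ℚ_[p])‖ ≤ (p:ℝ) ^ (-n) := by
  have hp1 : (1:ℝ) < (p:ℝ) := by exact_mod_cast hp.out.one_lt
  have hpR : (0:ℝ) < (p:ℝ) := by positivity
  obtain ⟨m, hm⟩ : ∃ m : ℕ, ‖(p:ℚ_[p]) ^ (m:ℤ) * x‖ ≤ 1 := by
    rcases eq_or_ne x 0 with rfl | hx
    · exact ⟨0, by simp⟩
    · refine ⟨(-x.valuation).toNat, ?_⟩
      rw [norm_mul, Padic.norm_p_zpow, Padic.norm_eq_zpow_neg_valuation hx,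
        ← zpow_add₀ (ne_of_gt hpR)]
      have hle : (-(((-x.valuation).toNat : ℤ)) + -x.valuation) ≤ 0 := by omega
      calc (p:ℝ) ^ (-(((-x.valuation).toNat:ℤ)) + -x.valuation) ≤ (p:ℝ) ^ (0:ℤ) :=
            zpow_le_zpow_right₀ (le_of_lt hp1) hle
        _ = 1 := by simp
  let y : ℤ_[p] := ⟨(p:ℚ_[p]) ^ (m:ℤ) * x, hm⟩
  let k : ℕ := (n + m).toNat
  refine ⟨(y.appr k : ℤ) / (p:ℚ) ^ m, ⟨y.appr k, m, by norm_num⟩, ?_⟩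
  have happr : ‖y - (y.appr k : ℤ_[p])‖ ≤ (p:ℝ) ^ (-(k:ℤ)) :=
    (PadicInt.norm_le_pow_iff_mem_span_pow _ k).2 (PadicInt.appr_spec k y)
  have hcoe : ‖(y:ℚ_[p]) - ((y.appr k : ℕ) : ℚ_[p])‖ ≤ (p:ℝ) ^ (-(k:ℤ)) := by
    rw [show ((y:ℚ_[p]) - ((y.appr k : ℕ):ℚ_[p])) = ((y - (y.appr k : ℤ_[p]) : ℤ_[p]) : ℚ_[p])
      by push_cast; ring, PadicInt.padic_norm_e_of_padicInt]
    exact happr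
  have hpQp : ((p:ℚ_[p])) ≠ 0 := by exact_mod_cast hp.out.ne_zero
  have key : (p:ℚ_[p]) ^ (m:ℤ) *
      (x - (((((y.appr k : ℤ):ℚ))/(p:ℚ)^m : ℚ) : ℚ_[p])) = (y:ℚ_[p]) - ((y.appr k : ℕ) : ℚ_[p]) := by
    show _ = (p:ℚ_[p]) ^ (m:ℤ) * x - _
    push_cast
    rw [zpow_natCast]
    field_simp
  have hnormx : ‖x - (((((y.appr k : ℤ):ℚ))/(p:ℚ)^m : ℚ) : ℚ_[p])‖
      = (p:ℝ)^(m:ℤ) * ‖(y:ℚ_[p]) - ((y.appr k : ℕ) : ℚ_[p])‖ := by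
    rw [← key, norm_mul, Padic.norm_p_zpow, ← mul_assoc, ← zpow_add₀ (ne_of_gt hpR)]
    simp
  rw [hnormx]
  calc (p:ℝ)^(m:ℤ) * ‖(y:ℚ_[p]) - ((y.appr k : ℕ) : ℚ_[p])‖
      ≤ (p:ℝ)^(m:ℤ) * (p:ℝ)^(-(k:ℤ)) := mul_le_mul_of_nonneg_left hcoe (by positivity)
    _ = (p:ℝ)^((m:ℤ) + -(k:ℤ)) := by rw [← zpow_add₀ (ne_of_gt hpR)]
    _ ≤ (p:ℝ)^(-n) := zpow_le_zpow_right₀ (le_of_lt hp1) (by omega)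

/-- integrality -/
lemma toInt {q : ℚ} (h : InZInvP p q) (hn : ‖(q : ℚ_[p])‖ ≤ 1) : ∃ z : ℤ, q = (z : ℚ) := by
  obtain ⟨m, n, rfl⟩ := h
  have hpne : ((p:ℚ)) ≠ 0 := pQ_ne
  have hmm : ‖((m:ℚ) : ℚ_[p])‖ ≤ (p:ℝ) ^ (-(n:ℤ)) := by
    have hrw : ((m:ℚ):ℚ_[p]) = (((m:ℚ)/(p:ℚ)^n : ℚ) : ℚ_[p]) * (p:ℚ_[p]) ^ (n:ℤ) := by
      push_cast
      rw [zpow_natCast]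
      field_simp
      rw [mul_div_cancel_right₀ _ (pow_ne_zero _ (by exact_mod_cast hp.out.ne_zero : (p:ℚ_[p]) ≠ 0))]
    rw [hrw, norm_mul, Padic.norm_p_zpow]
    calc ‖(((m:ℚ)/(p:ℚ)^n : ℚ) : ℚ_[p])‖ * (p:ℝ)^(-(n:ℤ)) ≤ 1 * (p:ℝ)^(-(n:ℤ)) :=
          mul_le_mul_of_nonneg_right hn (by positivity)
      _ = (p:ℝ)^(-(n:ℤ)) := one_mul _
  have hdvd : (p:ℤ) ^ n ∣ m := by
    rw [← Padic.norm_int_le_pow_iff_dvd]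
    exact_mod_cast hmm
  obtain ⟨z, rfl⟩ := hdvd
  refine ⟨z, ?_⟩
  push_cast
  field_simp

def IsIntM (A : SL2 ℚ_[p]) : Prop :=
  ∀ i j, ‖(A : Matrix (Fin 2) (Fin 2) ℚ_[p]) i j‖ ≤ 1

lemma map_coe (f : ℚ →+* ℚ_[p]) (γ : SL2 ℚ) (i j : Fin 2) :
    ((Matrix.SpecialLinearGroup.map f γ : SL2 ℚ_[p]) : Matrix (Fin 2) (Fin 2) ℚ_[p]) i j
      = f ((γ : Matrix (Fin 2) (Fin 2) ℚ) i j) := by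
  rfl

lemma mul_coe (A B : SL2 ℚ_[p]) (i j : Fin 2) :
    ((A * B : SL2 ℚ_[p]) : Matrix (Fin 2) (Fin 2) ℚ_[p]) i j
    = (A : Matrix (Fin 2) (Fin 2) ℚ_[p]) i 0 * (B : Matrix (Fin 2) (Fin 2) ℚ_[p]) 0 j
      + (A : Matrix (Fin 2) (Fin 2) ℚ_[p]) i 1 * (B : Matrix (Fin 2) (Fin 2) ℚ_[p]) 1 j := by
  rw [Matrix.SpecialLinearGroup.coe_mul, Matrix.mul_apply, Fin.sum_univ_two]

lemma IsIntM.mul {A B : SL2 ℚ_[p]} (hA : IsIntM A) (hB : IsIntM B) : IsIntM (A * B) := by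
  intro i j
  rw [mul_coe]
  refine le_trans (Padic.nonarchimedean _ _) (max_le ?_ ?_) <;>
    · rw [norm_mul]
      exact mul_le_one₀ (by solve_by_elim) (norm_nonneg _) (by solve_by_elim)

lemma IsIntM.inv {A : SL2 ℚ_[p]} (hA : IsIntM A) : IsIntM A⁻¹ := by
  intro i j
  rw [Matrix.SpecialLinearGroup.coe_inv, Matrix.adjugate_fin_two]
  fin_cases i <;> fin_cases j <;> simp <;> solve_by_elim

lemma IsIntM.one : IsIntM (1 : SL2 ℚ_[p]) := by
  intro i j
  rw [Matrix.SpecialLinearGroup.coe_one]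
  fin_cases i <;> fin_cases j <;> simp

lemma map_coe' {R S : Type*} [CommRing R] [CommRing S] (f : R →+* S) (γ : SL2 R) (i j : Fin 2) :
    ((Matrix.SpecialLinearGroup.map f γ : SL2 S) : Matrix (Fin 2) (Fin 2) S) i j
      = f ((γ : Matrix (Fin 2) (Fin 2) R) i j) := by
  rfl

lemma mul_coe' {R : Type*} [CommRing R] (A B : SL2 R) (i j : Fin 2) :
    ((A * B : SL2 R) : Matrix (Fin 2) (Fin 2) R) i j
    = (A : Matrix (Fin 2) (Fin 2) R) i 0 * (B : Matrix (Fin 2) (Fin 2) R) 0 j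
      + (A : Matrix (Fin 2) (Fin 2) R) i 1 * (B : Matrix (Fin 2) (Fin 2) R) 1 j := by
  rw [Matrix.SpecialLinearGroup.coe_mul, Matrix.mul_apply, Fin.sum_univ_two]

lemma SLE.mul {γ δ : SL2 ℚ} (h1 : SLEntriesInZInvP p γ) (h2 : SLEntriesInZInvP p δ) :
    SLEntriesInZInvP p (γ * δ) := by
  intro i j
  rw [mul_coe']
  exact ZIP.add (ZIP.mul (h1 i 0) (h2 0 j)) (ZIP.mul (h1 i 1) (h2 1 j))

lemma SLE.inv {γ : SL2 ℚ} (h1 : SLEntriesInZInvP p γ) : SLEntriesInZInvP p γ⁻¹ := by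
  intro i j
  rw [Matrix.SpecialLinearGroup.coe_inv, Matrix.adjugate_fin_two]
  fin_cases i <;> fin_cases j <;>
    simp only [Fin.zero_eta, Fin.mk_one, Matrix.cons_val', Matrix.cons_val_zero,
      Matrix.cons_val_one, Matrix.head_cons, Matrix.head_fin_const, Matrix.empty_val',
      Matrix.cons_val_fin_one, Matrix.of_apply]
  · exact h1 1 1
  · exact ZIP.neg (h1 0 1)
  · exact ZIP.neg (h1 1 0)
  · exact h1 0 0

lemma SLE.int (B : SL2 ℤ) :
    SLEntriesInZInvP p (Matrix.SpecialLinearGroup.map (Int.castRingHom ℚ) B) := by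
  intro i j
  rw [map_coe']
  exact ZIP.intCast _

lemma mapmapR (γ₀ : SL2 ℤ) :
    Matrix.SpecialLinearGroup.map (Rat.castHom ℝ)
        (Matrix.SpecialLinearGroup.map (Int.castRingHom ℚ) γ₀)
      = Matrix.SpecialLinearGroup.map (Int.castRingHom ℝ) γ₀ :=
  Matrix.SpecialLinearGroup.ext _ _ fun i j => by
    rw [show ∀ (A : SL2 ℝ) i j, A i j = (A : Matrix (Fin 2) (Fin 2) ℝ) i j from fun _ _ _ => rfl]
    rw [show ∀ (A : SL2 ℝ) i j, A i j = (A : Matrix (Fin 2) (Fin 2) ℝ) i j from fun _ _ _ => rfl]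
    rw [map_coe', map_coe', map_coe']
    simp

lemma intM (γ₀ : SL2 ℤ) :
    IsIntM (Matrix.SpecialLinearGroup.map (Rat.castHom ℚ_[p])
      (Matrix.SpecialLinearGroup.map (Int.castRingHom ℚ) γ₀)) := by
  intro i j
  rw [map_coe', map_coe']
  rw [show ((Rat.castHom ℚ_[p]) ((Int.castRingHom ℚ) ((γ₀ : Matrix (Fin 2) (Fin 2) ℤ) i j)))
      = (((γ₀ : Matrix (Fin 2) (Fin 2) ℤ) i j : ℤ) : ℚ_[p]) by push_cast; rfl]
  exact Padic.norm_int_le_one _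

lemma upper (h : SL2 ℚ_[p]) (h10 : (h : Matrix (Fin 2) (Fin 2) ℚ_[p]) 1 0 = 0) :
    ∃ γ : SL2 ℚ, SLEntriesInZInvP p γ ∧ IsIntM (h * Matrix.SpecialLinearGroup.map (Rat.castHom ℚ_[p]) γ) := by
  have hpR : (0:ℝ) < (p:ℝ) := by exact_mod_cast hp.out.pos
  set M : Matrix (Fin 2) (Fin 2) ℚ_[p] := (h : Matrix (Fin 2) (Fin 2) ℚ_[p]) with hM
  have hdet : M 0 0 * M 1 1 - M 0 1 * M 1 0 = 1 := by
    rw [← Matrix.det_fin_two]; exact h.prop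
  rw [h10, mul_zero, sub_zero] at hdet
  have ha0 : M 0 0 ≠ 0 := by
    intro h0; rw [h0, zero_mul] at hdet; exact zero_ne_one hdet
  have hd : M 1 1 = (M 0 0)⁻¹ := eq_inv_of_mul_eq_one_left (by linear_combination hdet)
  set n : ℤ := (M 0 0).valuation with hn
  have hna : ‖M 0 0‖ = (p:ℝ) ^ (-n) := Padic.norm_eq_zpow_neg_valuation ha0
  obtain ⟨q, hqZ, hq⟩ := ZIP.dense ((p:ℚ_[p]) ^ n * M 0 1 * M 1 1) (-n)
  have hdet' : ((!![(p:ℚ)^(-n), -q; 0, (p:ℚ)^n] : Matrix (Fin 2) (Fin 2) ℚ)).det = 1 := by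
    rw [Matrix.det_fin_two_of, ← zpow_add₀ (pQ_ne (p:=p))]
    simp
  refine ⟨⟨!![(p:ℚ)^(-n), -q; 0, (p:ℚ)^n], hdet'⟩, ?_, ?_⟩
  · intro i j
    fin_cases i <;> fin_cases j <;>
      simp only [Matrix.SpecialLinearGroup.coe_mk, Fin.zero_eta, Fin.mk_one,
        Matrix.cons_val', Matrix.cons_val_zero, Matrix.cons_val_one, Matrix.head_cons,
        Matrix.head_fin_const, Matrix.empty_val', Matrix.cons_val_fin_one, Matrix.of_apply]
    · exact ZIP.zpow (-n)
    · exact ZIP.neg hqZ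
    · exact ZIP.zero
    · exact ZIP.zpow n
  · have hcoe : ((h * Matrix.SpecialLinearGroup.map (Rat.castHom ℚ_[p])
        ⟨!![(p:ℚ)^(-n), -q; 0, (p:ℚ)^n], hdet'⟩ : SL2 ℚ_[p]) :
          Matrix (Fin 2) (Fin 2) ℚ_[p])
        = !![M 0 0 * (p:ℚ_[p])^(-n), M 0 0 * (((p:ℚ_[p]) ^ n * M 0 1 * M 1 1) - (q:ℚ_[p]));
             0, M 1 1 * (p:ℚ_[p])^n] := by
      ext i j
      fin_cases i <;> fin_cases j <;>
        · erw [mul_coe, map_coe, map_coe, ← hM]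
          simp only [Matrix.SpecialLinearGroup.coe_mk, Fin.zero_eta, Fin.mk_one,
            Matrix.cons_val', Matrix.cons_val_zero, Matrix.cons_val_one, Matrix.head_cons,
            Matrix.head_fin_const, Matrix.empty_val', Matrix.cons_val_fin_one, Matrix.of_apply,
            map_zpow₀, map_neg, map_natCast, map_zero, Rat.coe_castHom, h10]
          try ring
          try linear_combination (-((p:ℚ_[p])^n * M 0 1)) * hdet
    rw [IsIntM, hcoe]
    intro i j
    fin_cases i <;> fin_cases j <;>
      simp only [Fin.zero_eta, Fin.mk_one, Matrix.cons_val', Matrix.cons_val_zero,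
        Matrix.cons_val_one, Matrix.head_cons, Matrix.head_fin_const, Matrix.empty_val',
        Matrix.cons_val_fin_one, Matrix.of_apply]
    · rw [norm_mul, hna, Padic.norm_p_zpow, ← zpow_add₀ (ne_of_gt hpR)]
      simp
    · rw [norm_mul, hna]
      calc (p:ℝ)^(-n) * ‖(p:ℚ_[p]) ^ n * M 0 1 * M 1 1 - (q:ℚ_[p])‖
          ≤ (p:ℝ)^(-n) * (p:ℝ)^(-(-n)) := mul_le_mul_of_nonneg_left hq (by positivity)
        _ = 1 := by rw [← zpow_add₀ (ne_of_gt hpR)]; simp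
    · simp
    · rw [norm_mul, hd, norm_inv, hna, Padic.norm_p_zpow, ← _root_.zpow_neg,
        ← zpow_add₀ (ne_of_gt hpR)]
      simp

lemma decomp (g : SL2 ℚ_[p]) :
    ∃ γ : SL2 ℚ, SLEntriesInZInvP p γ ∧
      IsIntM (g * Matrix.SpecialLinearGroup.map (Rat.castHom ℚ_[p]) γ) := by
  obtain ⟨l, hl, hlinv, hl10⟩ : ∃ l : SL2 ℚ_[p], IsIntM l ∧ IsIntM l⁻¹ ∧
      ((l * g : SL2 ℚ_[p]) : Matrix (Fin 2) (Fin 2) ℚ_[p]) 1 0 = 0 := by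
    set M : Matrix (Fin 2) (Fin 2) ℚ_[p] := (g : Matrix (Fin 2) (Fin 2) ℚ_[p]) with hM
    rcases le_or_gt ‖M 1 0‖ ‖M 0 0‖ with hc | hc
    · have ha0 : M 0 0 ≠ 0 := by
        intro h0
        have h1 : M 1 0 = 0 := by
          rw [← norm_le_zero_iff]
          simpa [h0] using hc
        have hdet : M 0 0 * M 1 1 - M 0 1 * M 1 0 = 1 := by
          rw [← Matrix.det_fin_two]; exact g.prop
        rw [h0, h1] at hdet; simp at hdet
      have hano : (0:ℝ) < ‖M 0 0‖ := norm_pos_iff.2 ha0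
      refine ⟨⟨!![1, 0; -(M 1 0)/(M 0 0), 1], by simp [Matrix.det_fin_two_of]⟩, ?_, ?_, ?_⟩
      · intro i j
        fin_cases i <;> fin_cases j <;>
          simp only [Matrix.SpecialLinearGroup.coe_mk, Fin.zero_eta, Fin.mk_one,
            Matrix.cons_val', Matrix.cons_val_zero, Matrix.cons_val_one, Matrix.head_cons,
            Matrix.head_fin_const, Matrix.empty_val', Matrix.cons_val_fin_one, Matrix.of_apply]
        · simp
        · simp
        · rw [norm_div, norm_neg, div_le_one hano]; exact hc
        · simp
      · intro i j
        erw [Matrix.SpecialLinearGroup.coe_inv, Matrix.SpecialLinearGroup.coe_mk,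
          Matrix.adjugate_fin_two]
        fin_cases i <;> fin_cases j <;>
          simp only [Fin.zero_eta, Fin.mk_one, Matrix.cons_val', Matrix.cons_val_zero,
            Matrix.cons_val_one, Matrix.head_cons, Matrix.head_fin_const, Matrix.empty_val',
            Matrix.cons_val_fin_one, Matrix.of_apply]
        · simp
        · simp
        · rw [norm_neg, norm_div, norm_neg, div_le_one hano]; exact hc
        · simp
      · erw [mul_coe, ← hM, Matrix.SpecialLinearGroup.coe_mk]
        simp only [Fin.zero_eta, Fin.mk_one, Matrix.cons_val', Matrix.cons_val_zero,
          Matrix.cons_val_one, Matrix.head_cons, Matrix.head_fin_const, Matrix.empty_val',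
          Matrix.cons_val_fin_one, Matrix.of_apply]
        field_simp
        ring
    · have hc0 : M 1 0 ≠ 0 := by
        intro h0
        rw [h0, norm_zero] at hc
        exact absurd hc (not_lt.2 (norm_nonneg _))
      have hcno : (0:ℝ) < ‖M 1 0‖ := norm_pos_iff.2 hc0
      refine ⟨⟨!![0, -1; 1, -(M 0 0)/(M 1 0)], by simp [Matrix.det_fin_two_of]⟩, ?_, ?_, ?_⟩
      · intro i j
        fin_cases i <;> fin_cases j <;>
          simp only [Matrix.SpecialLinearGroup.coe_mk, Fin.zero_eta, Fin.mk_one,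
            Matrix.cons_val', Matrix.cons_val_zero, Matrix.cons_val_one, Matrix.head_cons,
            Matrix.head_fin_const, Matrix.empty_val', Matrix.cons_val_fin_one, Matrix.of_apply]
        · simp
        · simp
        · simp
        · rw [norm_div, norm_neg, div_le_one hcno]; exact le_of_lt hc
      · intro i j
        erw [Matrix.SpecialLinearGroup.coe_inv, Matrix.SpecialLinearGroup.coe_mk,
          Matrix.adjugate_fin_two]
        fin_cases i <;> fin_cases j <;>
          simp only [Fin.zero_eta, Fin.mk_one, Matrix.cons_val', Matrix.cons_val_zero,
            Matrix.cons_val_one, Matrix.head_cons, Matrix.head_fin_const, Matrix.empty_val',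
            Matrix.cons_val_fin_one, Matrix.of_apply]
        · rw [norm_div, norm_neg, div_le_one hcno]; exact le_of_lt hc
        · simp
        · simp
        · simp
      · erw [mul_coe, ← hM, Matrix.SpecialLinearGroup.coe_mk]
        simp only [Fin.zero_eta, Fin.mk_one, Matrix.cons_val', Matrix.cons_val_zero,
          Matrix.cons_val_one, Matrix.head_cons, Matrix.head_fin_const, Matrix.empty_val',
          Matrix.cons_val_fin_one, Matrix.of_apply]
        field_simp
        ring
  obtain ⟨γ, hγ, hint⟩ := upper (l * g) hl10
  refine ⟨γ, hγ, ?_⟩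
  have hrw : l⁻¹ * (l * g * Matrix.SpecialLinearGroup.map (Rat.castHom ℚ_[p]) γ)
      = g * Matrix.SpecialLinearGroup.map (Rat.castHom ℚ_[p]) γ := by
    rw [mul_assoc l g _, inv_mul_cancel_left]
  rw [← hrw]
  exact hlinv.mul hint

end ZIP

/-- **`D_∞ × SL₂(ℤ_p)` is a fundamental domain for the diagonally embedded
`SL₂(ℤ[1/p])` in `SL₂(ℝ) × SL₂(ℚ_p)`:** if `D_∞ ⊆ SL₂(ℝ)` is a fundamental domain for
`SL₂(ℤ)` (that is, for every `g ∈ SL₂(ℝ)` there is a unique `γ₀ ∈ SL₂(ℤ)` with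
`g·γ₀ ∈ D_∞`), then for every `(g_∞, g_p) ∈ SL₂(ℝ) × SL₂(ℚ_p)` there is a unique
`γ ∈ SL₂(ℤ[1/p])` with `g_∞·γ ∈ D_∞` and `g_p·γ ∈ SL₂(ℤ_p)`. -/
theorem fundamental_domain_SL2ZinvP_in_SL2R_times_SL2Qp
    (p : ℕ) [Fact p.Prime]
    (D : Set (Matrix.SpecialLinearGroup (Fin 2) ℝ))
    (hD : ∀ g : Matrix.SpecialLinearGroup (Fin 2) ℝ,
      ∃! γ₀ : Matrix.SpecialLinearGroup (Fin 2) ℤ,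
        g * Matrix.SpecialLinearGroup.map (Int.castRingHom ℝ) γ₀ ∈ D)
    (ginf : Matrix.SpecialLinearGroup (Fin 2) ℝ)
    (gp : Matrix.SpecialLinearGroup (Fin 2) ℚ_[p]) :
    ∃! γ : Matrix.SpecialLinearGroup (Fin 2) ℚ,
      SLEntriesInZInvP p γ ∧
      ginf * Matrix.SpecialLinearGroup.map (Rat.castHom ℝ) γ ∈ D ∧
      (∀ i j, ‖((gp * Matrix.SpecialLinearGroup.map (Rat.castHom ℚ_[p]) γ :
          Matrix.SpecialLinearGroup (Fin 2) ℚ_[p]) : Matrix (Fin 2) (Fin 2) ℚ_[p]) i j‖ ≤ 1) := by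
  classical
  obtain ⟨δ, hδZ, hδint⟩ := ZIP.decomp gp
  obtain ⟨γ₀, hγ₀D, _⟩ := hD (ginf * Matrix.SpecialLinearGroup.map (Rat.castHom ℝ) δ)
  set γ : SL2 ℚ := δ * Matrix.SpecialLinearGroup.map (Int.castRingHom ℚ) γ₀ with hγ
  have hcond1 : SLEntriesInZInvP p γ := ZIP.SLE.mul hδZ (ZIP.SLE.int γ₀)
  have hcond2 : ginf * Matrix.SpecialLinearGroup.map (Rat.castHom ℝ) γ ∈ D := by
    rw [hγ, _root_.map_mul, ZIP.mapmapR, ← mul_assoc]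
    exact hγ₀D
  have hcond3 : ZIP.IsIntM (gp * Matrix.SpecialLinearGroup.map (Rat.castHom ℚ_[p]) γ) := by
    rw [hγ, _root_.map_mul, ← mul_assoc]
    exact hδint.mul (ZIP.intM γ₀)
  refine ⟨γ, ⟨hcond1, hcond2, hcond3⟩, ?_⟩
  rintro γ' ⟨h1, h2, h3⟩
  -- β = γ⁻¹ * γ' has entries in ℤ[1/p] and p-adic norm ≤ 1, hence integer entries
  set β : SL2 ℚ := γ⁻¹ * γ' with hβ
  have hβZ : SLEntriesInZInvP p β := ZIP.SLE.mul (ZIP.SLE.inv hcond1) h1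
  have hβint : ZIP.IsIntM (Matrix.SpecialLinearGroup.map (Rat.castHom ℚ_[p]) β) := by
    have : Matrix.SpecialLinearGroup.map (Rat.castHom ℚ_[p]) β
        = (gp * Matrix.SpecialLinearGroup.map (Rat.castHom ℚ_[p]) γ)⁻¹
          * (gp * Matrix.SpecialLinearGroup.map (Rat.castHom ℚ_[p]) γ') := by
      rw [hβ, _root_.map_mul, _root_.map_inv]
      group
    rw [this]
    exact (ZIP.IsIntM.inv hcond3).mul h3
  have hz : ∀ i j, ∃ z : ℤ, ((β : Matrix (Fin 2) (Fin 2) ℚ) i j) = (z : ℚ) := by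
    intro i j
    refine ZIP.toInt (hβZ i j) ?_
    have := hβint i j
    rwa [ZIP.map_coe', show ((Rat.castHom ℚ_[p]) ((β : Matrix (Fin 2) (Fin 2) ℚ) i j))
      = (((β : Matrix (Fin 2) (Fin 2) ℚ) i j : ℚ) : ℚ_[p]) from rfl] at this
  choose z hzz using hz
  have hdetz : (Matrix.of fun i j => z i j : Matrix (Fin 2) (Fin 2) ℤ).det = 1 := by
    have hβdet : (β : Matrix (Fin 2) (Fin 2) ℚ).det = 1 := β.prop
    rw [Matrix.det_fin_two] at hβdet ⊢
    rw [hzz, hzz, hzz, hzz] at hβdet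
    exact_mod_cast hβdet
  set B : SL2 ℤ := ⟨Matrix.of fun i j => z i j, hdetz⟩ with hB
  have hmapB : Matrix.SpecialLinearGroup.map (Int.castRingHom ℚ) B = β := by
    refine Matrix.SpecialLinearGroup.ext _ _ fun i j => ?_
    rw [show ∀ (A : SL2 ℚ) i j, A i j = (A : Matrix (Fin 2) (Fin 2) ℚ) i j from fun _ _ _ => rfl]
    rw [show ∀ (A : SL2 ℚ) i j, A i j = (A : Matrix (Fin 2) (Fin 2) ℚ) i j from fun _ _ _ => rfl]
    rw [ZIP.map_coe', hzz i j]
    rfl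
  -- apply uniqueness of hD at ginf * γ
  obtain ⟨γu, hγu, huniq⟩ := hD (ginf * Matrix.SpecialLinearGroup.map (Rat.castHom ℝ) γ)
  have hBu : B = γu := by
    refine huniq B ?_
    show ginf * Matrix.SpecialLinearGroup.map (Rat.castHom ℝ) γ
      * Matrix.SpecialLinearGroup.map (Int.castRingHom ℝ) B ∈ D
    rw [← ZIP.mapmapR, hmapB, mul_assoc, ← _root_.map_mul]
    rw [show γ * β = γ' by rw [hβ]; group]
    exact h2
  have h1u : (1 : SL2 ℤ) = γu := by
    refine huniq 1 ?_
    show ginf * Matrix.SpecialLinearGroup.map (Rat.castHom ℝ) γ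
      * Matrix.SpecialLinearGroup.map (Int.castRingHom ℝ) 1 ∈ D
    rw [_root_.map_one, mul_one]
    exact hcond2
  have hβ1 : β = 1 := by
    rw [← hmapB, hBu, ← h1u, _root_.map_one]
  have : γ * β = γ' := by rw [hβ]; group
  rw [← this, hβ1, mul_one]
end

section
/- Let p be a prime. Every g ∈ SL₂(ℚ_p) can be written as g = k·γ where k ∈ SL₂(ℤ_p) and γ is (the image in SL₂(ℚ_p) of) a matrix in SL₂(ℤ[1/p]); equivalently, SL₂(ℚ_p) = SL₂(ℤ_p) · SL₂(ℤ[1/p]). -/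
section Aux

variable (p : ℕ) [hp : Fact p.Prime]

omit hp in
lemma aux_zinvp_zpow (hp0 : (p : ℚ) ≠ 0) (v : ℤ) : InZInvP p ((p : ℚ) ^ v) := by
  obtain ⟨n, rfl | rfl⟩ := v.eq_nat_or_neg
  · exact ⟨(p : ℤ) ^ n, 0, by push_cast; simp⟩
  · exact ⟨1, n, by push_cast [zpow_neg]; simp⟩

omit hp in
lemma aux_zinvp_mul_zpow (hp0 : (p : ℚ) ≠ 0) {q : ℚ} (h : InZInvP p q) (v : ℤ) :
    InZInvP p (q * (p : ℚ) ^ v) := by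
  obtain ⟨m, n, rfl⟩ := h
  obtain ⟨k, rfl | rfl⟩ := v.eq_nat_or_neg
  · refine ⟨m * p ^ k, n, ?_⟩
    push_cast
    field_simp
    rw [zpow_natCast]
  · refine ⟨m, n + k, ?_⟩
    push_cast [zpow_neg, zpow_natCast, pow_add]
    rw [← div_div]
    ring

lemma aux_dense0 (x : ℚ_[p]) : ∃ r : ℚ, InZInvP p r ∧ ‖x - (r : ℚ_[p])‖ ≤ 1 := by
  have hp1 : (1 : ℝ) < p := by exact_mod_cast hp.out.one_lt
  obtain ⟨n, hn⟩ := pow_unbounded_of_one_lt ‖x‖ hp1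
  have hppos : (0 : ℝ) < (p : ℝ) ^ n := by positivity
  have hy : ‖x * (p : ℚ_[p]) ^ n‖ ≤ 1 := by
    rw [norm_mul, Padic.norm_p_pow, zpow_neg, zpow_natCast, ← div_eq_mul_inv,
      div_le_one hppos]
    exact hn.le
  set z : ℤ_[p] := ⟨x * (p : ℚ_[p]) ^ n, hy⟩ with hz
  obtain ⟨t, ht⟩ := Ideal.mem_span_singleton.mp (PadicInt.appr_spec n z)
  refine ⟨((z.appr n : ℤ) : ℚ) / (p : ℚ) ^ n, ⟨(z.appr n : ℤ), n, rfl⟩, ?_⟩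
  have hpQ : ((p : ℚ_[p])) ^ n ≠ 0 := by
    apply pow_ne_zero
    exact_mod_cast hp.out.ne_zero
  have hcoe : ((z : ℚ_[p])) = x * (p : ℚ_[p]) ^ n := rfl
  have ht' : (z : ℚ_[p]) - (z.appr n : ℚ_[p]) = (p : ℚ_[p]) ^ n * (t : ℚ_[p]) := by
    exact_mod_cast congrArg (fun w : ℤ_[p] => (w : ℚ_[p])) ht
  have key : x - ((((z.appr n : ℤ) : ℚ) / (p : ℚ) ^ n : ℚ) : ℚ_[p]) = (t : ℚ_[p]) := by
    rw [hcoe] at ht'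
    push_cast
    rw [div_eq_mul_inv, sub_eq_iff_eq_add, ← sub_eq_iff_eq_add',
      eq_mul_inv_iff_mul_eq₀ hpQ]
    linear_combination ht'
  rw [key, PadicInt.padic_norm_e_of_padicInt]
  exact t.norm_le_one

lemma aux_dense (x : ℚ_[p]) (v : ℤ) :
    ∃ r : ℚ, InZInvP p r ∧ ‖x - (r : ℚ_[p])‖ ≤ (p : ℝ) ^ v := by
  obtain ⟨r₀, h0, h1⟩ := aux_dense0 p (x * (p : ℚ_[p]) ^ v)
  have hp0 : (p : ℚ_[p]) ≠ 0 := by exact_mod_cast hp.out.ne_zero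
  have hp0' : (p : ℚ) ≠ 0 := by exact_mod_cast hp.out.ne_zero
  refine ⟨r₀ * (p : ℚ) ^ (-v), aux_zinvp_mul_zpow p hp0' h0 (-v), ?_⟩
  have key : x - ((r₀ * (p : ℚ) ^ (-v) : ℚ) : ℚ_[p])
      = (p : ℚ_[p]) ^ (-v) * (x * (p : ℚ_[p]) ^ v - (r₀ : ℚ_[p])) := by
    push_cast
    rw [zpow_neg]
    field_simp
  rw [key, norm_mul, Padic.norm_p_zpow, neg_neg]
  calc (p:ℝ) ^ v * ‖x * (p : ℚ_[p]) ^ v - (r₀ : ℚ_[p])‖ ≤ (p:ℝ) ^ v * 1 :=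
        mul_le_mul_of_nonneg_left h1 (by positivity)
    _ = (p:ℝ) ^ v := mul_one _

lemma aux_lift (K : Matrix.SpecialLinearGroup (Fin 2) ℚ_[p])
    (h : ∀ i j, ‖(K : Matrix (Fin 2) (Fin 2) ℚ_[p]) i j‖ ≤ 1) :
    ∃ k : Matrix.SpecialLinearGroup (Fin 2) ℤ_[p],
      Matrix.SpecialLinearGroup.map (PadicInt.Coe.ringHom) k = K := by
  let M : Matrix (Fin 2) (Fin 2) ℤ_[p] := fun i j => ⟨K.1 i j, h i j⟩
  have hmap : (PadicInt.Coe.ringHom (p := p)).mapMatrix M = K.1 := by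
    ext i j; rfl
  have hdet : M.det = 1 := by
    have h2 : PadicInt.Coe.ringHom (p := p) M.det = PadicInt.Coe.ringHom (p := p) 1 := by
      rw [RingHom.map_det, hmap, K.2, map_one]
    exact Subtype.coe_injective h2
  refine ⟨⟨M, hdet⟩, ?_⟩
  apply Matrix.SpecialLinearGroup.ext
  intro i j
  rfl

lemma aux_caseA (g : Matrix.SpecialLinearGroup (Fin 2) ℚ_[p])
    (hca : ‖(g : Matrix (Fin 2) (Fin 2) ℚ_[p]) 1 0‖ ≤ ‖(g : Matrix (Fin 2) (Fin 2) ℚ_[p]) 0 0‖) :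
    ∃ (k : Matrix.SpecialLinearGroup (Fin 2) ℤ_[p])
      (γ : Matrix.SpecialLinearGroup (Fin 2) ℚ),
      SLEntriesInZInvP p γ ∧
      g = Matrix.SpecialLinearGroup.map (PadicInt.Coe.ringHom) k *
            Matrix.SpecialLinearGroup.map (Rat.castHom ℚ_[p]) γ := by
  set a : ℚ_[p] := g.1 0 0 with ha'
  set b : ℚ_[p] := g.1 0 1 with hb'
  set c : ℚ_[p] := g.1 1 0 with hc'
  set d : ℚ_[p] := g.1 1 1 with hd'
  have hdet : a * d - b * c = 1 := by
    have := g.2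
    rw [Matrix.det_fin_two] at this
    exact this
  have ha : a ≠ 0 := by
    intro h
    rw [h, norm_zero] at hca
    rw [h, norm_le_zero_iff.mp hca] at hdet
    simp at hdet
  set v : ℤ := a.valuation with hv
  have hnorma : ‖a‖ = (p : ℝ) ^ (-v) := Padic.norm_eq_zpow_neg_valuation ha
  set P' : ℚ_[p] := (p : ℚ_[p]) ^ v with hP'def
  have hP'norm : ‖P'‖ = (p : ℝ) ^ (-v) := Padic.norm_p_zpow v
  have hpQp : (p : ℚ_[p]) ≠ 0 := by exact_mod_cast hp.out.ne_zero
  have hP'ne : P' ≠ 0 := zpow_ne_zero _ hpQp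
  have hpQ : (p : ℚ) ≠ 0 := by exact_mod_cast hp.out.ne_zero
  have hpR : ((p : ℝ)) ^ (-v) ≠ 0 := by
    apply zpow_ne_zero
    exact_mod_cast hp.out.ne_zero
  set P : ℚ := (p : ℚ) ^ v with hPdef
  have hPne : P ≠ 0 := zpow_ne_zero _ hpQ
  have hPcast : ((P : ℚ) : ℚ_[p]) = P' := by
    rw [hPdef, hP'def]; push_cast; ring
  obtain ⟨r, hrZ, hr⟩ := aux_dense p (b * P' / a) v
  -- the rational matrices γ and δ = γ⁻¹
  have hγdet : Matrix.det !![P, r; 0, P⁻¹] = 1 := by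
    rw [Matrix.det_fin_two_of]
    field_simp
    ring
  have hδdet : Matrix.det !![P⁻¹, -r; 0, P] = 1 := by
    rw [Matrix.det_fin_two_of]
    field_simp
    ring
  set γ : Matrix.SpecialLinearGroup (Fin 2) ℚ := ⟨!![P, r; 0, P⁻¹], hγdet⟩ with hγdef
  set δ : Matrix.SpecialLinearGroup (Fin 2) ℚ := ⟨!![P⁻¹, -r; 0, P], hδdet⟩ with hδdef
  have hδγ : δ * γ = 1 := by
    apply Matrix.SpecialLinearGroup.ext
    intro i j
    rw [Matrix.SpecialLinearGroup.coe_mul]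
    fin_cases i <;> fin_cases j <;>
      simp [hδdef, hγdef, Matrix.mul_apply, Fin.sum_univ_two] <;>
      field_simp <;>
      ring
  set K : Matrix.SpecialLinearGroup (Fin 2) ℚ_[p] :=
    g * Matrix.SpecialLinearGroup.map (Rat.castHom ℚ_[p]) δ with hKdef
  have hKmat : (K.1 : Matrix (Fin 2) (Fin 2) ℚ_[p])
      = g.1 * (Rat.castHom ℚ_[p]).mapMatrix δ.1 := by
    rw [hKdef]
    rfl
  have hK00 : K.1 0 0 = a * P'⁻¹ := by
    rw [hKmat, hδdef]
    simp [Matrix.mul_apply, Fin.sum_univ_two, ← hPcast, ← ha']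
  have hK10 : K.1 1 0 = c * P'⁻¹ := by
    rw [hKmat, hδdef]
    simp [Matrix.mul_apply, Fin.sum_univ_two, ← hPcast, ← hc']
  have hK01 : K.1 0 1 = a * (-(r : ℚ_[p])) + b * P' := by
    rw [hKmat, hδdef]
    simp [Matrix.mul_apply, Fin.sum_univ_two, ← hPcast, ← ha', ← hb']
  have hK11 : K.1 1 1 = c * (-(r : ℚ_[p])) + d * P' := by
    rw [hKmat, hδdef]
    simp [Matrix.mul_apply, Fin.sum_univ_two, ← hPcast, ← hc', ← hd']
  have hb00 : ‖a * P'⁻¹‖ = 1 := by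
    rw [norm_mul, norm_inv, hnorma, hP'norm, mul_inv_cancel₀ hpR]
  have hb01 : ‖a * (-(r : ℚ_[p])) + b * P'‖ ≤ 1 := by
    have hid : a * (-(r : ℚ_[p])) + b * P' = a * (b * P' / a - (r : ℚ_[p])) := by
      field_simp
      ring
    rw [hid, norm_mul, hnorma]
    calc (p:ℝ) ^ (-v) * ‖b * P' / a - (r : ℚ_[p])‖ ≤ (p:ℝ) ^ (-v) * (p:ℝ) ^ v :=
          mul_le_mul_of_nonneg_left hr (by positivity)
      _ = 1 := by
          rw [← zpow_add₀ (by exact_mod_cast hp.out.ne_zero : ((p:ℝ)) ≠ 0), neg_add_cancel,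
            zpow_zero]
  have hb10 : ‖c * P'⁻¹‖ ≤ 1 := by
    rw [norm_mul, norm_inv, hP'norm]
    calc ‖c‖ * ((p:ℝ) ^ (-v))⁻¹ ≤ ‖a‖ * ((p:ℝ) ^ (-v))⁻¹ :=
          mul_le_mul_of_nonneg_right hca (by positivity)
      _ = 1 := by rw [hnorma, mul_inv_cancel₀ hpR]
  have hb11 : ‖c * (-(r : ℚ_[p])) + d * P'‖ ≤ 1 := by
    have hid : c * (-(r : ℚ_[p])) + d * P'
        = (c / a) * (a * (-(r : ℚ_[p])) + b * P') + P' / a := by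
      field_simp
      linear_combination P' * hdet
    rw [hid]
    refine le_trans (Padic.nonarchimedean _ _) (max_le ?_ ?_)
    · rw [norm_mul]
      have h1 : ‖c / a‖ ≤ 1 := by
        rw [norm_div, div_le_one (norm_pos_iff.mpr ha)]
        exact hca
      calc ‖c / a‖ * ‖a * (-(r : ℚ_[p])) + b * P'‖ ≤ 1 * 1 :=
            mul_le_mul h1 hb01 (norm_nonneg _) zero_le_one
        _ = 1 := mul_one 1
    · rw [norm_div, hP'norm, hnorma, div_self hpR]
  have hKentries : ∀ i j, ‖(K : Matrix (Fin 2) (Fin 2) ℚ_[p]) i j‖ ≤ 1 := by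
    intro i j
    fin_cases i <;> fin_cases j
    · exact le_of_eq (hK00 ▸ hb00)
    · exact hK01 ▸ hb01
    · exact hK10 ▸ hb10
    · exact hK11 ▸ hb11
  obtain ⟨k, hk⟩ := aux_lift p K hKentries
  refine ⟨k, γ, ?_, ?_⟩
  · intro i j
    fin_cases i <;> fin_cases j <;> simp [hγdef]
    · exact aux_zinvp_zpow p hpQ v
    · exact hrZ
    · exact ⟨0, 0, by norm_num⟩
    · rw [hPdef, ← zpow_neg]
      exact aux_zinvp_zpow p hpQ (-v)
  · rw [hk, hKdef, mul_assoc,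
      ← _root_.map_mul (Matrix.SpecialLinearGroup.map (Rat.castHom ℚ_[p])), hδγ, map_one,
      mul_one]

end Aux

/-- **`SL₂(ℚ_p) = SL₂(ℤ_p) · SL₂(ℤ[1/p])`:** every `g ∈ SL₂(ℚ_p)` can be written as
`g = k·γ` with `k ∈ SL₂(ℤ_p)` and `γ` the image in `SL₂(ℚ_p)` of a matrix in
`SL₂(ℤ[1/p])`. -/
theorem SL2Qp_eq_SL2Zp_mul_SL2ZinvP
    (p : ℕ) [Fact p.Prime] (g : Matrix.SpecialLinearGroup (Fin 2) ℚ_[p]) :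
    ∃ (k : Matrix.SpecialLinearGroup (Fin 2) ℤ_[p])
      (γ : Matrix.SpecialLinearGroup (Fin 2) ℚ),
      SLEntriesInZInvP p γ ∧
      g = Matrix.SpecialLinearGroup.map (PadicInt.Coe.ringHom) k *
            Matrix.SpecialLinearGroup.map (Rat.castHom ℚ_[p]) γ := by
  by_cases hca : ‖(g : Matrix (Fin 2) (Fin 2) ℚ_[p]) 1 0‖ ≤ ‖(g : Matrix (Fin 2) (Fin 2) ℚ_[p]) 0 0‖
  · exact aux_caseA p g hca
  push_neg at hca
  have hVdet : Matrix.det (!![0, 1; -1, 0] : Matrix (Fin 2) (Fin 2) ℚ_[p]) = 1 := by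
    rw [Matrix.det_fin_two_of]; ring
  have hWdet : Matrix.det (!![0, -1; 1, 0] : Matrix (Fin 2) (Fin 2) ℚ_[p]) = 1 := by
    rw [Matrix.det_fin_two_of]; ring
  have hWZdet : Matrix.det (!![0, -1; 1, 0] : Matrix (Fin 2) (Fin 2) ℤ_[p]) = 1 := by
    rw [Matrix.det_fin_two_of]; ring
  set V : Matrix.SpecialLinearGroup (Fin 2) ℚ_[p] := ⟨!![0, 1; -1, 0], hVdet⟩ with hVdef
  set W' : Matrix.SpecialLinearGroup (Fin 2) ℚ_[p] := ⟨!![0, -1; 1, 0], hWdet⟩ with hW'def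
  set W : Matrix.SpecialLinearGroup (Fin 2) ℤ_[p] := ⟨!![0, -1; 1, 0], hWZdet⟩ with hWdef
  have hWV : W' * V = 1 := by
    apply Matrix.SpecialLinearGroup.ext
    intro i j
    rw [Matrix.SpecialLinearGroup.coe_mul]
    fin_cases i <;> fin_cases j <;>
      simp [hW'def, hVdef, Matrix.mul_apply, Fin.sum_univ_two]
  have hmapW : Matrix.SpecialLinearGroup.map (PadicInt.Coe.ringHom) W = W' := by
    apply Matrix.SpecialLinearGroup.ext
    intro i j
    rw [Matrix.SpecialLinearGroup.map_apply_coe]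
    fin_cases i <;> fin_cases j <;>
      simp [hWdef, hW'def]
  have hentry0 : ((V * g : Matrix.SpecialLinearGroup (Fin 2) ℚ_[p])
      : Matrix (Fin 2) (Fin 2) ℚ_[p]) 0 0 = (g : Matrix (Fin 2) (Fin 2) ℚ_[p]) 1 0 := by
    rw [Matrix.SpecialLinearGroup.coe_mul]
    simp [hVdef, Matrix.mul_apply, Fin.sum_univ_two]
  have hentry1 : ((V * g : Matrix.SpecialLinearGroup (Fin 2) ℚ_[p])
      : Matrix (Fin 2) (Fin 2) ℚ_[p]) 1 0 = -((g : Matrix (Fin 2) (Fin 2) ℚ_[p]) 0 0) := by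
    rw [Matrix.SpecialLinearGroup.coe_mul]
    simp [hVdef, Matrix.mul_apply, Fin.sum_univ_two]
  have hbound : ‖((V * g : Matrix.SpecialLinearGroup (Fin 2) ℚ_[p])
      : Matrix (Fin 2) (Fin 2) ℚ_[p]) 1 0‖ ≤ ‖((V * g : Matrix.SpecialLinearGroup (Fin 2) ℚ_[p])
      : Matrix (Fin 2) (Fin 2) ℚ_[p]) 0 0‖ := by
    rw [hentry0, hentry1, norm_neg]
    exact hca.le
  obtain ⟨k', γ, hγ, heq⟩ := aux_caseA p (V * g) hbound
  refine ⟨W * k', γ, hγ, ?_⟩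
  rw [_root_.map_mul, hmapW, mul_assoc, ← heq, ← mul_assoc, hWV, one_mul]
end

section
/- Let p be a prime. A vector v ∈ ℤ[1/p]² is primitive over ℤ[1/p] (i.e. there exist x, y ∈ ℤ[1/p] with v₁·x + v₂·y = 1) if and only if there exist an integer α ∈ ℤ and a primitive integer vector w ∈ ℤ²_prim such that v = p^α · w. -/
/-- A vector `v ∈ ℤ[1/p]²` is primitive over `ℤ[1/p]`: the gcd equation
`v₁·x + v₂·y = 1` has a solution with `x, y ∈ ℤ[1/p]`. -/
def IsPrimitiveZInvP (p : ℕ) (v : ℚ × ℚ) : Prop :=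
  ∃ x y : ℚ, InZInvP p x ∧ InZInvP p y ∧ v.1 * x + v.2 * y = 1

lemma inZInvP_zpow_mul (p : ℕ) (α : ℤ) (m : ℤ) : InZInvP p ((p:ℚ)^α * m) := by
  cases α with
  | ofNat n =>
    exact ⟨m * p ^ n, 0, by
      rw [show (Int.ofNat n) = (n:ℤ) from rfl, zpow_natCast]; push_cast; ring⟩
  | negSucc n => exact ⟨m, n+1, by rw [zpow_negSucc]; field_simp⟩

/-- **Primitive vectors of `ℤ[1/p]²` are exactly the `p`-power multiples of primitive
integer vectors:** a vector `v ∈ ℤ[1/p]²` is primitive over `ℤ[1/p]` iff `v = p^α · w`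
for some `α ∈ ℤ` and some `w ∈ ℤ²` with coprime coordinates. -/
theorem primitive_ZinvP_iff_ppow_mul_primitive_int
    (p : ℕ) (hp : p.Prime) (v : ℚ × ℚ) (hv : InZInvP p v.1 ∧ InZInvP p v.2) :
    IsPrimitiveZInvP p v ↔
      ∃ (α : ℤ) (w : ℤ × ℤ), IsCoprime w.1 w.2 ∧
        v.1 = (p : ℚ) ^ α * (w.1 : ℚ) ∧ v.2 = (p : ℚ) ^ α * (w.2 : ℚ) := by
  have hp0 : (p:ℚ) ≠ 0 := Nat.cast_ne_zero.mpr hp.ne_zero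
  constructor
  · rintro ⟨x, y, ⟨c, s, hx⟩, ⟨d, t, hy⟩, hxy⟩
    obtain ⟨⟨a1, n1, h1⟩, ⟨a2, n2, h2⟩⟩ := hv
    set a : ℤ := a1 * p ^ n2 with ha
    set b : ℤ := a2 * p ^ n1 with hb
    set n := n1 + n2 with hn
    have h1' : v.1 = (a:ℚ) / (p:ℚ) ^ n := by
      rw [h1, ha, hn]; push_cast; rw [pow_add]; field_simp
    have h2' : v.2 = (b:ℚ) / (p:ℚ) ^ n := by
      rw [h2, hb, hn]; push_cast; rw [pow_add]; field_simp
    have key : a * c * (p:ℤ) ^ (n+t) + b * d * (p:ℤ) ^ (n+s) = (p:ℤ) ^ (n + s + n + t) := by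
      have h := hxy
      rw [h1', h2', hx, hy] at h
      field_simp at h
      have keyQ : ((a * c * (p:ℤ) ^ (n+t) + b * d * (p:ℤ) ^ (n+s) : ℤ) : ℚ)
          = (((p:ℤ) ^ (n + s + n + t) : ℤ) : ℚ) := by
        push_cast
        linear_combination ((p:ℚ)^n) * h
      exact_mod_cast keyQ
    set g : ℕ := Int.gcd a b with hg
    have hgdvd : (g:ℤ) ∣ (p:ℤ) ^ (n + s + n + t) := by
      rw [← key]
      exact dvd_add (Dvd.dvd.mul_right ((Int.gcd_dvd_left a b).mul_right c) _)
        (Dvd.dvd.mul_right ((Int.gcd_dvd_right a b).mul_right d) _)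
    have hgdvdN : g ∣ p ^ (n + s + n + t) := by exact_mod_cast hgdvd
    obtain ⟨k, hk, hgk⟩ := (Nat.dvd_prime_pow hp).mp hgdvdN
    have hgpos : 0 < g := hgk ▸ pow_pos hp.pos k
    refine ⟨(k : ℤ) - n, (a / (g:ℤ), b / (g:ℤ)), ?_, ?_, ?_⟩
    · rw [Int.isCoprime_iff_gcd_eq_one]
      exact Int.gcd_div_gcd_div_gcd hgpos
    · have haw : (a:ℚ) = (p:ℚ)^k * ((a / (g:ℤ) : ℤ) : ℚ) := by
        have h0 : (g:ℤ) * (a / (g:ℤ)) = a := Int.mul_ediv_cancel' (Int.gcd_dvd_left a b)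
        have hgq : ((g:ℕ):ℚ) = (p:ℚ)^k := by exact_mod_cast congrArg (Nat.cast (R := ℚ)) hgk
        rw [← hgq]
        exact_mod_cast (congrArg (fun z : ℤ => (z : ℚ)) h0).symm
      rw [h1', zpow_sub₀ hp0, zpow_natCast, zpow_natCast, haw]
      field_simp
    · have hbw : (b:ℚ) = (p:ℚ)^k * ((b / (g:ℤ) : ℤ) : ℚ) := by
        have h0 : (g:ℤ) * (b / (g:ℤ)) = b := Int.mul_ediv_cancel' (Int.gcd_dvd_right a b)
        have hgq : ((g:ℕ):ℚ) = (p:ℚ)^k := by exact_mod_cast congrArg (Nat.cast (R := ℚ)) hgk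
        rw [← hgq]
        exact_mod_cast (congrArg (fun z : ℤ => (z : ℚ)) h0).symm
      rw [h2', zpow_sub₀ hp0, zpow_natCast, zpow_natCast, hbw]
      field_simp
  · rintro ⟨α, w, hw, h1, h2⟩
    obtain ⟨x0, y0, hxy0⟩ := hw
    refine ⟨(p:ℚ)^(-α) * x0, (p:ℚ)^(-α) * y0, inZInvP_zpow_mul p _ _, inZInvP_zpow_mul p _ _, ?_⟩
    have hpc : (p:ℚ)^α * (p:ℚ)^(-α) = 1 := by
      rw [← zpow_add₀ hp0]; simp
    have cEq : (x0:ℚ) * w.1 + (y0:ℚ) * w.2 = 1 := by exact_mod_cast congrArg (Int.cast : ℤ → ℚ) hxy0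
    rw [h1, h2]
    linear_combination ((p:ℚ)^α * (p:ℚ)^(-α)) * cEq + hpc
end

section
/- Let p be a prime. A vector v ∈ ℤ[1/p]² is primitive over ℤ[1/p] and satisfies ‖v‖_p = 1 (viewing v in ℚ_p²) if and only if v is a primitive integer vector, i.e. v ∈ ℤ² with gcd(v₁, v₂) = 1. In particular ℤ²_prim = ℤ[1/p]²_prim ∩ S¹_p. -/
lemma aux_int (p : ℕ) [Fact p.Prime] (m : ℤ) (n : ℕ)
    (h : ‖(((m : ℚ) / (p:ℚ)^n : ℚ) : ℚ_[p])‖ ≤ 1) : ∃ a : ℤ, (m:ℚ)/(p:ℚ)^n = (a:ℚ) := by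
  have hp := Fact.out (p := p.Prime)
  have hp0 : (p:ℚ) ≠ 0 := by exact_mod_cast hp.ne_zero
  have hdvd : ((p:ℤ)^n) ∣ m := by
    rw [← Padic.norm_int_le_pow_iff_dvd]
    have hq : (((m : ℚ) / (p:ℚ)^n : ℚ) : ℚ_[p]) = (m : ℚ_[p]) / (p : ℚ_[p])^n := by push_cast; ring
    rw [hq, norm_div, norm_pow, Padic.norm_p] at h
    have hppos : (0:ℝ) < p := by exact_mod_cast hp.pos
    rw [div_le_one (by positivity)] at h
    calc ‖(m:ℚ_[p])‖ ≤ (↑p)⁻¹ ^ n := h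
    _ = (p:ℝ) ^ (-n : ℤ) := by rw [inv_pow, ← zpow_natCast, ← zpow_neg]
  obtain ⟨a, rfl⟩ := hdvd
  refine ⟨a, ?_⟩; push_cast; field_simp


/-- **`ℤ²_prim = ℤ[1/p]²_prim ∩ S¹_p`:** a vector `v ∈ ℤ[1/p]²` is primitive over
`ℤ[1/p]` and has `p`-adic norm `‖v‖_p = max(|v₁|_p, |v₂|_p) = 1` iff `v` is a primitive
integer vector, i.e. `v ∈ ℤ²` with coprime coordinates. -/
theorem primitive_ZinvP_on_padic_circle_iff_primitive_int
    (p : ℕ) [Fact p.Prime] (v : ℚ × ℚ) (hv : InZInvP p v.1 ∧ InZInvP p v.2) :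
    (IsPrimitiveZInvP p v ∧ max ‖(v.1 : ℚ_[p])‖ ‖(v.2 : ℚ_[p])‖ = 1) ↔
      ∃ a b : ℤ, v.1 = (a : ℚ) ∧ v.2 = (b : ℚ) ∧ IsCoprime a b := by
  have hp := Fact.out (p := p.Prime)
  have hp0 : (p:ℚ) ≠ 0 := by exact_mod_cast hp.ne_zero
  have hc : ∀ k : ℤ, (((k:ℚ)):ℚ_[p]) = ((k:ℤ) : ℚ_[p]) := fun k => by push_cast; ring
  constructor
  · rintro ⟨⟨x, y, ⟨s, k1, rfl⟩, ⟨t, k2, rfl⟩, hxy⟩, hmax⟩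
    obtain ⟨m1, n1, h1⟩ := hv.1
    obtain ⟨m2, n2, h2⟩ := hv.2
    have hle1 : ‖(v.1 : ℚ_[p])‖ ≤ 1 := hmax ▸ le_max_left _ _
    have hle2 : ‖(v.2 : ℚ_[p])‖ ≤ 1 := hmax ▸ le_max_right _ _
    obtain ⟨a, ha⟩ := aux_int p m1 n1 (by rw [← h1]; exact hle1)
    obtain ⟨b, hb⟩ := aux_int p m2 n2 (by rw [← h2]; exact hle2)
    have hv1 : v.1 = (a:ℚ) := h1.trans ha
    have hv2 : v.2 = (b:ℚ) := h2.trans hb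
    rw [hv1, hv2] at hxy hmax
    refine ⟨a, b, hv1, hv2, ?_⟩
    have key : (a:ℚ) * s * (p:ℚ)^k2 + (b:ℚ) * t * (p:ℚ)^k1 = (p:ℚ)^(k1+k2) := by
      have hne1 : (p:ℚ)^k1 ≠ 0 := pow_ne_zero _ hp0
      have hne2 : (p:ℚ)^k2 ≠ 0 := pow_ne_zero _ hp0
      field_simp at hxy
      rw [pow_add]
      linear_combination hxy
    have keyZ : a * s * (p:ℤ)^k2 + b * t * (p:ℤ)^k1 = (p:ℤ)^(k1+k2) := by
      exact_mod_cast key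
    have hgcd_dvd : (Int.gcd a b : ℤ) ∣ (p:ℤ)^(k1+k2) := by
      rw [← keyZ]
      exact dvd_add (((Int.gcd_dvd_left a b).mul_right _).mul_right _)
        (((Int.gcd_dvd_right a b).mul_right _).mul_right _)
    have hnot : ¬ ((p:ℤ) ∣ a ∧ (p:ℤ) ∣ b) := by
      rintro ⟨hda, hdb⟩
      have l1 : ‖((a:ℚ) : ℚ_[p])‖ < 1 := by
        rw [hc a]; exact (Padic.norm_intCast_lt_one_iff (k := a)).2 hda
      have l2 : ‖((b:ℚ) : ℚ_[p])‖ < 1 := by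
        rw [hc b]; exact (Padic.norm_intCast_lt_one_iff (k := b)).2 hdb
      have := max_lt l1 l2
      rw [hmax] at this
      exact lt_irrefl _ this
    rw [Int.isCoprime_iff_gcd_eq_one]
    have hgcdnat : (Int.gcd a b) ∣ p^(k1+k2) := by exact_mod_cast hgcd_dvd
    obtain ⟨j, hjle, hj⟩ := (Nat.dvd_prime_pow hp).1 hgcdnat
    rcases Nat.eq_zero_or_pos j with hj0 | hjpos
    · rw [hj0, pow_zero] at hj; exact hj
    · exfalso
      apply hnot
      have hpdvd : (p:ℤ) ∣ (Int.gcd a b : ℤ) := by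
        exact_mod_cast hj ▸ dvd_pow_self p hjpos.ne'
      exact ⟨hpdvd.trans (Int.gcd_dvd_left a b), hpdvd.trans (Int.gcd_dvd_right a b)⟩
  · rintro ⟨a, b, h1, h2, hcop⟩
    obtain ⟨u, w, huv⟩ := hcop
    have ha1 : ‖(v.1 : ℚ_[p])‖ ≤ 1 := by
      rw [h1, hc a]; exact Padic.norm_int_le_one a
    have hb1 : ‖(v.2 : ℚ_[p])‖ ≤ 1 := by
      rw [h2, hc b]; exact Padic.norm_int_le_one b
    constructor
    · refine ⟨(u:ℚ), (w:ℚ), ⟨u, 0, by simp⟩, ⟨w, 0, by simp⟩, ?_⟩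
      rw [h1, h2]
      have h := congrArg (fun z : ℤ => (z:ℚ)) huv
      push_cast at h
      linear_combination h
    · have hnotboth : ¬ ((p:ℤ) ∣ a ∧ (p:ℤ) ∣ b) := by
        rintro ⟨hda, hdb⟩
        have hd1 : (p:ℤ) ∣ 1 := huv ▸ dvd_add (hda.mul_left u) (hdb.mul_left w)
        have := Int.le_of_dvd one_pos hd1
        have := hp.two_le
        omega
      rcases not_and_or.1 hnotboth with hnd | hnd
      · have he : ‖(v.1 : ℚ_[p])‖ = 1 := by
          refine le_antisymm ha1 (not_lt.1 fun hlt => hnd ?_)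
          rw [h1, hc a] at hlt
          exact (Padic.norm_intCast_lt_one_iff (k := a)).1 hlt
        exact le_antisymm (max_le ha1 hb1) (he ▸ le_max_left _ _)
      · have he : ‖(v.2 : ℚ_[p])‖ = 1 := by
          refine le_antisymm hb1 (not_lt.1 fun hlt => hnd ?_)
          rw [h2, hc b] at hlt
          exact (Padic.norm_intCast_lt_one_iff (k := b)).1 hlt
        exact le_antisymm (max_le ha1 hb1) (he ▸ le_max_right _ _)
end

section
/- Let p be a prime and let v = (a, b) ∈ ℤ[1/p]² be primitive over ℤ[1/p] with |b|_p ≥ |a|_p (so b ≠ 0). Then there exists a unique pair (x, y) ∈ ℤ[1/p]² such that: (i) b·y + a·x = 1 (equivalently, the matrix with columns v^⊥ = (b, −a) and w = (x, y) lies in SL₂(ℤ[1/p])); (ii) the real number (b·x − a·y)/(a² + b²) lies in [−1/2, 1/2); and (iii) the p-adic number x/b lies in ℤ_p. In particular, primitive vectors v of ℤ[1/p]² with |b|_p ≥ |a|_p are in bijection with matrices γ_v = (v^⊥ | w) ∈ SL₂(ℤ[1/p]) whose real Iwasawa N-coordinate lies in [−1/2, 1/2) and whose p-adic Bruhat N-coordinate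 lies in ℤ_p. -/
section aux
variable {p : ℕ} [hp : Fact p.Prime]

lemma pQ_ne : (p:ℚ) ≠ 0 := Nat.cast_ne_zero.mpr hp.out.pos.ne'

lemma InZInvP.int (m : ℤ) : InZInvP p (m : ℚ) := ⟨m, 0, by simp⟩

lemma InZInvP.add {x y : ℚ} (hx : InZInvP p x) (hy : InZInvP p y) : InZInvP p (x + y) := by
  obtain ⟨m1, n1, rfl⟩ := hx
  obtain ⟨m2, n2, rfl⟩ := hy
  refine ⟨m1 * p ^ n2 + m2 * p ^ n1, n1 + n2, ?_⟩
  have h1 : (p:ℚ)^n1 ≠ 0 := pow_ne_zero _ pQ_ne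
  have h2 : (p:ℚ)^n2 ≠ 0 := pow_ne_zero _ pQ_ne
  rw [div_add_div _ _ h1 h2, ← pow_add]
  congr 1
  push_cast
  ring

lemma InZInvP.neg {x : ℚ} (hx : InZInvP p x) : InZInvP p (-x) := by
  obtain ⟨m, n, rfl⟩ := hx
  exact ⟨-m, n, by push_cast; ring⟩

lemma InZInvP.mul {x y : ℚ} (hx : InZInvP p x) (hy : InZInvP p y) : InZInvP p (x * y) := by
  obtain ⟨m1, n1, rfl⟩ := hx
  obtain ⟨m2, n2, rfl⟩ := hy
  refine ⟨m1 * m2, n1 + n2, ?_⟩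
  push_cast
  rw [pow_add]
  ring

lemma InZInvP.sub_s9 {x y : ℚ} (hx : InZInvP p x) (hy : InZInvP p y) : InZInvP p (x - y) := by
  rw [sub_eq_add_neg]; exact hx.add hy.neg

lemma exists_approx (r : ℚ) : ∃ s : ℚ, InZInvP p s ∧ ‖((r + s : ℚ) : ℚ_[p])‖ ≤ 1 := by
  rcases eq_or_ne r 0 with rfl | h
  · exact ⟨0, ⟨0, 0, by simp⟩, by simp⟩
  · set x : ℚ_[p] := (r : ℚ_[p]) with hxdef
    have hx : x ≠ 0 := by
      simpa [hxdef] using (Rat.cast_ne_zero (α := ℚ_[p])).mpr h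
    set n : ℕ := (-x.valuation).toNat with hn
    have hple : (1:ℝ) < p := by exact_mod_cast hp.out.one_lt
    have hval : ‖x‖ ≤ (p:ℝ) ^ (n:ℤ) := by
      rw [Padic.norm_eq_zpow_neg_valuation hx]
      apply zpow_le_zpow_right₀ hple.le
      exact Int.self_le_toNat _
    have hy : ‖(p : ℚ_[p]) ^ n * x‖ ≤ 1 := by
      rw [norm_mul, Padic.norm_p_pow]
      calc (p:ℝ) ^ (-n:ℤ) * ‖x‖ ≤ (p:ℝ) ^ (-n:ℤ) * (p:ℝ) ^ (n:ℤ) := by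
            apply mul_le_mul_of_nonneg_left hval (by positivity)
        _ = 1 := by rw [← zpow_add₀ (by positivity), neg_add_cancel, zpow_zero]
    set z : ℤ_[p] := ⟨_, hy⟩ with hz
    set m : ℕ := z.appr n with hm
    have hspec : ‖z - (m : ℤ_[p])‖ ≤ (p:ℝ) ^ (-n:ℤ) := by
      rw [PadicInt.norm_le_pow_iff_mem_span_pow]
      exact PadicInt.appr_spec n z
    have hspec' : ‖(p : ℚ_[p]) ^ n * x - (m : ℚ_[p])‖ ≤ (p:ℝ) ^ (-n:ℤ) := by
      have : ((z - (m:ℤ_[p]) : ℤ_[p]) : ℚ_[p]) = (p : ℚ_[p]) ^ n * x - (m : ℚ_[p]) := by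
        push_cast [hz]
        rfl
      rw [← this]
      exact hspec
    refine ⟨-((m:ℚ) / (p:ℚ)^n), ⟨-(m:ℤ), n, by push_cast; ring⟩, ?_⟩
    have hcast : ((r + -((m:ℚ) / (p:ℚ)^n) : ℚ) : ℚ_[p])
        = ((p : ℚ_[p]) ^ n * x - (m : ℚ_[p])) / (p : ℚ_[p]) ^ n := by
      have hpne : ((p:ℚ_[p]))^n ≠ 0 := by
        apply pow_ne_zero
        exact_mod_cast (Nat.cast_ne_zero (R := ℚ_[p])).mpr hp.out.pos.ne'
      field_simp [hxdef]
      push_cast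
      rw [hxdef, add_mul, neg_mul, div_mul_cancel₀ _ hpne]
      ring
    rw [hcast, norm_div, Padic.norm_p_pow]
    rw [div_le_one (by positivity)]
    calc ‖(p : ℚ_[p]) ^ n * x - (m : ℚ_[p])‖ ≤ (p:ℝ) ^ (-n:ℤ) := hspec'
      _ ≤ (p:ℝ)^(-n:ℤ) * 1 := by rw [mul_one]
      _ = _ := by rw [mul_one]

end aux

/-- **Unique matrix completion of a primitive `ℤ[1/p]²` vector with prescribed Iwasawa
and Bruhat `N`-coordinates:** if `v = (a, b) ∈ ℤ[1/p]²` is primitive with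
`|b|_p ≥ |a|_p` (so `b ≠ 0`), then there is a unique `(x, y) ∈ ℤ[1/p]²` such that
(i) `b·y + a·x = 1` (so `(v^⊥ | (x,y)) ∈ SL₂(ℤ[1/p])` with `v^⊥ = (b, −a)`);
(ii) the real Iwasawa `N`-coordinate `(b·x − a·y)/(a² + b²)` lies in `[−1/2, 1/2)`;
(iii) the `p`-adic Bruhat `N`-coordinate `x/b` lies in `ℤ_p`. -/
theorem exists_unique_completion_of_primitive_vector
    (p : ℕ) [Fact p.Prime] (a b : ℚ)
    (ha : InZInvP p a) (hb : InZInvP p b)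
    (hprim : IsPrimitiveZInvP p (a, b))
    (hnorm : ‖(a : ℚ_[p])‖ ≤ ‖(b : ℚ_[p])‖) :
    ∃! w : ℚ × ℚ, InZInvP p w.1 ∧ InZInvP p w.2 ∧
      b * w.2 + a * w.1 = 1 ∧
      ((b * w.1 - a * w.2 : ℚ) : ℝ) / ((a : ℝ)^2 + (b : ℝ)^2) ∈
        Set.Ico (-(1/2) : ℝ) (1/2) ∧
      ‖(w.1 : ℚ_[p]) / (b : ℚ_[p])‖ ≤ 1 := by
  obtain ⟨x₀, y₀, hx₀Z, hy₀Z, hsum⟩ := hprim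
  simp only at hsum
  have hbne : b ≠ 0 := by
    rintro rfl
    have hA : (a : ℚ_[p]) = 0 := by
      have := hnorm
      simp only [Rat.cast_zero, norm_zero] at this
      exact norm_le_zero_iff.mp this
    have ha0 : a = 0 := by exact_mod_cast hA
    rw [ha0] at hsum
    simp at hsum
  have hbQp : (b : ℚ_[p]) ≠ 0 := by exact_mod_cast hbne
  have hD : a^2 + b^2 ≠ 0 := by positivity
  have hDR : (a:ℝ)^2 + (b:ℝ)^2 ≠ 0 := by
    have : (b:ℝ) ≠ 0 := by exact_mod_cast hbne
    positivity
  obtain ⟨s, hsZ, hs⟩ := exists_approx (p := p) (x₀ / b)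
  set c₀ : ℚ := (b * x₀ - a * y₀) / (a^2 + b^2) with hc₀
  set M : ℤ := -⌊c₀ + s + 1/2⌋ with hM
  set t : ℚ := s + M with ht
  have htZ : InZInvP p t := hsZ.add (InZInvP.int M)
  set x : ℚ := x₀ + t * b with hx
  set y : ℚ := y₀ - t * a with hy
  have hxZ : InZInvP p x := hx₀Z.add (htZ.mul hb)
  have hyZ : InZInvP p y := hy₀Z.sub_s9 (htZ.mul ha)
  have hfl : (⌊c₀ + s + 1/2⌋ : ℚ) ≤ c₀ + s + 1/2 := Int.floor_le _
  have hfl' : c₀ + s + 1/2 < ⌊c₀ + s + 1/2⌋ + 1 := Int.lt_floor_add_one _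
  have hIvl : -(1/2) ≤ c₀ + t ∧ c₀ + t < 1/2 := by
    constructor
    · rw [ht, hM]; push_cast; linarith
    · rw [ht, hM]; push_cast; linarith
  have hkey : b * x - a * y = (c₀ + t) * (a^2 + b^2) := by
    rw [hx, hy, hc₀]
    field_simp
    ring
  have hIcoR : ((b * x - a * y : ℚ) : ℝ) / ((a : ℝ)^2 + (b : ℝ)^2) ∈
      Set.Ico (-(1/2) : ℝ) (1/2) := by
    have hval : ((b * x - a * y : ℚ) : ℝ) / ((a : ℝ)^2 + (b : ℝ)^2) = ((c₀ + t : ℚ) : ℝ) := by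
      rw [hkey]
      push_cast
      field_simp
    rw [hval]
    constructor
    · have h1 : ((-(1/2) : ℚ) : ℝ) ≤ ((c₀ + t : ℚ) : ℝ) := Rat.cast_le.mpr hIvl.1
      push_cast at h1 ⊢
      linarith
    · have h1 : ((c₀ + t : ℚ) : ℝ) < (((1:ℚ)/2 : ℚ) : ℝ) := Rat.cast_lt.mpr hIvl.2
      push_cast at h1 ⊢
      linarith
  have hxb : x / b = (x₀ / b + s) + (M:ℚ) := by
    rw [hx, ht]; field_simp; ring
  have hpadx : ‖(x : ℚ_[p]) / (b : ℚ_[p])‖ ≤ 1 := by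
    have hcast : (x : ℚ_[p]) / (b : ℚ_[p]) = ((x₀/b + s : ℚ) : ℚ_[p]) + ((M:ℤ) : ℚ_[p]) := by
      have h2 : ((x/b : ℚ) : ℚ_[p]) = ((x₀/b + s : ℚ) : ℚ_[p]) + ((M:ℤ) : ℚ_[p]) := by
        rw [hxb]; push_cast; ring
      rw [← h2]; push_cast; ring
    rw [hcast]
    exact le_trans (Padic.nonarchimedean _ _) (max_le hs (Padic.norm_int_le_one M))
  have heq : b * y + a * x = 1 := by simp only [hx, hy]; linear_combination hsum
  refine ⟨(x, y), ⟨hxZ, hyZ, heq, hIcoR, hpadx⟩, ?_⟩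
  rintro ⟨x', y'⟩ ⟨hx'Z, hy'Z, heq', hIco', hpad'⟩
  simp only at hx'Z hy'Z heq' hIco' hpad'
  set τ : ℚ := (x' - x) / b with hτ
  have hτb : τ * b = x' - x := by rw [hτ]; field_simp
  have hlin : a * (x' - x) + b * (y' - y) = 0 := by linear_combination heq' - heq
  have hτa : a * τ = -(y' - y) := by
    rw [hτ, ← mul_div_assoc, div_eq_iff hbne]
    linear_combination hlin
  have hτZ : InZInvP p τ := by
    have hτeq : τ = -(x₀ * (y' - y)) + y₀ * (x' - x) := by
      rw [hτ, div_eq_iff hbne]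
      linear_combination x₀ * hlin - (x' - x) * hsum
    rw [hτeq]
    exact (hx₀Z.mul (hy'Z.sub_s9 hyZ)).neg.add (hy₀Z.mul (hx'Z.sub_s9 hxZ))
  have hτpad : ‖(τ : ℚ_[p])‖ ≤ 1 := by
    have h2 : (τ : ℚ_[p]) = (x' : ℚ_[p])/(b : ℚ_[p]) + -((x : ℚ_[p])/(b : ℚ_[p])) := by
      rw [hτ]
      push_cast
      rw [sub_div]
      ring
    rw [h2]
    refine le_trans (Padic.nonarchimedean _ _) (max_le hpad' ?_)
    rw [norm_neg]
    exact hpadx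
  obtain ⟨m, n, hmn⟩ := hτZ
  have hdvd : (p^n : ℤ) ∣ m := by
    rw [← Padic.norm_int_le_pow_iff_dvd]
    have hpQp : ((p:ℚ_[p]))^n ≠ 0 := by
      apply pow_ne_zero
      exact_mod_cast (Fact.out (p := p.Prime)).pos.ne'
    have hmτ : (m : ℚ_[p]) = (τ : ℚ_[p]) * (p : ℚ_[p])^n := by
      rw [hmn]
      push_cast
      rw [div_mul_cancel₀ _ (pow_ne_zero n (Nat.cast_ne_zero.mpr (Fact.out (p := p.Prime)).pos.ne' : (p:ℚ_[p]) ≠ 0))]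
    rw [hmτ, norm_mul, Padic.norm_p_pow]
    calc ‖(τ:ℚ_[p])‖ * (p:ℝ)^(-n:ℤ) ≤ 1 * (p:ℝ)^(-n:ℤ) :=
          mul_le_mul_of_nonneg_right hτpad (by positivity)
      _ = (p:ℝ)^(-n:ℤ) := one_mul _
  obtain ⟨k, hk⟩ := hdvd
  have hτk : τ = (k : ℚ) := by
    rw [hmn, hk]
    push_cast
    rw [mul_comm, mul_div_assoc, div_self (pow_ne_zero n (pQ_ne (p := p))), mul_one]
  -- real bound
  have hnum : (b*x' - a*y') - (b*x - a*y) = τ*(a^2+b^2) := by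
    linear_combination (-b) * hτb - a * hτa
  have hdiff : ((b * x' - a * y' : ℚ) : ℝ) / ((a : ℝ)^2 + (b : ℝ)^2)
      - ((b * x - a * y : ℚ) : ℝ) / ((a : ℝ)^2 + (b : ℝ)^2) = ((τ:ℚ) : ℝ) := by
    rw [div_sub_div_same, ← Rat.cast_sub, hnum]
    push_cast
    field_simp
  have hb1 : -1 < ((τ:ℚ):ℝ) := by
    have := hIco'.1; have := hIco'.2; have := hIcoR.1; have := hIcoR.2
    rw [← hdiff]; linarith
  have hb2 : ((τ:ℚ):ℝ) < 1 := by
    have := hIco'.1; have := hIco'.2; have := hIcoR.1; have := hIcoR.2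
    rw [← hdiff]; linarith
  have hk0 : k = 0 := by
    rw [hτk] at hb1 hb2
    have h1 : (-1 : ℤ) < k := by exact_mod_cast hb1
    have h2 : k < 1 := by exact_mod_cast hb2
    omega
  have hτ0 : τ = 0 := by rw [hτk, hk0]; simp
  have hx'' : x' = x := by
    have := hτb; rw [hτ0] at this; linarith
  have hy'' : y' = y := by
    have := hτa; rw [hτ0] at this; simp at this; linarith
  simp [hx'', hy'']
end

section
/- Let p be a prime. Let q ∈ Q_p (lower triangular in SL₂(ℤ_p)), t ∈ ℤ, a = diag(p^{−t}, p^{t}), and n = [[1, x],[0, 1]] with x ∈ ℚ_p. Set c = max(1, p^{−2t})² · ‖Ad n‖, where ‖Ad n‖ is the operator norm of T ↦ n T n⁻¹ on Mat₂(ℚ_p) (a power of p). Then for every integer N ≥ 1 with c·p^{−N} < 1: O_{p^{−N}} · q a n · O_{p^{−N}} ⊆ q · O_{c·p^{−N}}^{Q_p} · a · O_{c·p^{−N}}^{N_p} · n. Moreover, c is bounded when x ranges over a bounded subset of ℚ_p and t is bounded from below. -/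
open Pointwise

variable (p : ℕ) [Fact p.Prime]

/-- The operator norm of a `2×2` matrix over `ℚ_p`, acting on `ℚ_p²` equipped with the
sup norm `‖v‖_p = max(|v 0|_p, |v 1|_p)`. -/
noncomputable def matOpNorm (T : Matrix (Fin 2) (Fin 2) ℚ_[p]) : ℝ :=
  sSup {r : ℝ | ∃ v : Fin 2 → ℚ_[p], ‖v‖ = 1 ∧ r = ‖T.mulVec v‖}

/-- The operator norm `‖Ad n‖` of the conjugation `T ↦ n T n⁻¹` by the upper unipotent
matrix `n = [[1,x],[0,1]]`, acting on `Mat₂(ℚ_p)` with its operator norm. -/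
noncomputable def adNorm (x : ℚ_[p]) : ℝ :=
  sSup {r : ℝ | ∃ T : Matrix (Fin 2) (Fin 2) ℚ_[p], matOpNorm p T = 1 ∧
    r = matOpNorm p (!![1, x; 0, 1] * T * !![1, -x; 0, 1])}

lemma pi_norm_two (v : Fin 2 → ℚ_[p]) : ‖v‖ = max ‖v 0‖ ‖v 1‖ := by
  rw [Pi.norm_def]
  rw [show (Finset.univ : Finset (Fin 2)) = {0, 1} from rfl]
  simp [Finset.sup_insert]

lemma matOpNorm_eq (T : Matrix (Fin 2) (Fin 2) ℚ_[p]) :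
    matOpNorm p T = max (max ‖T 0 0‖ ‖T 1 0‖) (max ‖T 0 1‖ ‖T 1 1‖) := by
  have hmv : ∀ (v : Fin 2 → ℚ_[p]) (i : Fin 2),
      T.mulVec v i = T i 0 * v 0 + T i 1 * v 1 := by
    intro v i
    simp [Matrix.mulVec, dotProduct, Fin.sum_univ_two]
  have hub : ∀ r ∈ {r : ℝ | ∃ v : Fin 2 → ℚ_[p], ‖v‖ = 1 ∧ r = ‖T.mulVec v‖},
      r ≤ max (max ‖T 0 0‖ ‖T 1 0‖) (max ‖T 0 1‖ ‖T 1 1‖) := by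
    rintro r ⟨v, hv, rfl⟩
    rw [pi_norm_two]
    have hv0 : ‖v 0‖ ≤ 1 := by rw [pi_norm_two] at hv; rw [← hv]; exact le_max_left _ _
    have hv1 : ‖v 1‖ ≤ 1 := by rw [pi_norm_two] at hv; rw [← hv]; exact le_max_right _ _
    have key : ∀ i : Fin 2, ‖T.mulVec v i‖ ≤ max ‖T i 0‖ ‖T i 1‖ := by
      intro i
      rw [hmv]
      refine le_trans (Padic.nonarchimedean _ _) (max_le_max ?_ ?_) <;>
        rw [norm_mul]
      · exact mul_le_of_le_one_right (norm_nonneg _) hv0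
      · exact mul_le_of_le_one_right (norm_nonneg _) hv1
    apply max_le
    · exact le_trans (key 0) (max_le (le_max_left _ _ |>.trans (le_max_left _ _))
        ((le_max_left _ _ : ‖T 0 1‖ ≤ _).trans (le_max_right _ _)))
    · exact le_trans (key 1) (max_le ((le_max_right _ _ : ‖T 1 0‖ ≤ _).trans (le_max_left _ _))
        ((le_max_right _ _ : ‖T 1 1‖ ≤ _).trans (le_max_right _ _)))
  have hcol : ∀ j : Fin 2,
      ‖T.mulVec (fun k => if k = j then 1 else 0)‖ = max ‖T 0 j‖ ‖T 1 j‖ := by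
    intro j
    rw [pi_norm_two]
    congr 1 <;> rw [hmv] <;> fin_cases j <;> simp
  have hcolmem : ∀ j : Fin 2, (max ‖T 0 j‖ ‖T 1 j‖) ∈
      {r : ℝ | ∃ v : Fin 2 → ℚ_[p], ‖v‖ = 1 ∧ r = ‖T.mulVec v‖} := by
    intro j
    refine ⟨fun k => if k = j then 1 else 0, ?_, (hcol j).symm⟩
    rw [pi_norm_two]
    fin_cases j <;> simp
  apply le_antisymm
  · exact Real.sSup_le hub (by positivity)
  · rcases le_total (max ‖T 0 0‖ ‖T 1 0‖) (max ‖T 0 1‖ ‖T 1 1‖) with h | h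
    · rw [max_eq_right h]
      exact le_csSup ⟨_, hub⟩ (hcolmem 1)
    · rw [max_eq_left h]
      exact le_csSup ⟨_, hub⟩ (hcolmem 0)

lemma qp_add_le (a b : ℚ_[p]) {r : ℝ} (ha : ‖a‖ ≤ r) (hb : ‖b‖ ≤ r) : ‖a + b‖ ≤ r :=
  le_trans (Padic.nonarchimedean a b) (max_le ha hb)

lemma qp_mul_le (a b : ℚ_[p]) {r s : ℝ} (ha : ‖a‖ ≤ r) (hb : ‖b‖ ≤ s) : ‖a * b‖ ≤ r * s := by
  rw [norm_mul]
  exact mul_le_mul ha hb (norm_nonneg b) ((norm_nonneg a).trans ha)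

lemma qp_norm_one_of (a : ℚ_[p]) (h : ‖a - 1‖ < 1) : ‖a‖ = 1 := by
  have h1 : ‖a‖ ≤ 1 := by
    have := qp_add_le p (a - 1) 1 (le_of_lt h) (by simp)
    simpa using this
  have h2 : (1:ℝ) ≤ ‖a‖ := by
    by_contra hc
    push_neg at hc
    have : ‖(1:ℚ_[p])‖ ≤ max ‖a - 1‖ ‖a‖ := by
      have := Padic.nonarchimedean (1 - a) a
      simpa [norm_sub_rev, sub_add_cancel] using this
    rw [norm_one] at this
    rcases max_cases ‖a - 1‖ ‖a‖ with ⟨he, _⟩ | ⟨he, _⟩ <;> rw [he] at this <;> linarith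
  linarith

lemma conj_entries (x : ℚ_[p]) (T : Matrix (Fin 2) (Fin 2) ℚ_[p]) :
    !![1, x; 0, 1] * T * !![1, -x; 0, 1] =
      !![T 0 0 + x * T 1 0, (T 0 0 + x * T 1 0) * (-x) + (T 0 1 + x * T 1 1);
         T 1 0, T 1 0 * (-x) + T 1 1] := by
  ext i j
  fin_cases i <;> fin_cases j <;>
    simp [Matrix.mul_apply, Fin.sum_univ_two, Matrix.vecMul, dotProduct] <;> ring

lemma adNorm_eq (x : ℚ_[p]) : adNorm p x = (max 1 ‖x‖) ^ 2 := by
  set M : ℝ := max 1 ‖x‖ with hM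
  have hM1 : (1:ℝ) ≤ M := le_max_left _ _
  have hxM : ‖x‖ ≤ M := le_max_right _ _
  have hMM : M ≤ M ^ 2 := by nlinarith
  have h1M : (1:ℝ) ≤ M ^ 2 := by nlinarith
  have hx2 : ‖x‖ ≤ M ^ 2 := by nlinarith [norm_nonneg x]
  have hub : ∀ r ∈ {r : ℝ | ∃ T : Matrix (Fin 2) (Fin 2) ℚ_[p], matOpNorm p T = 1 ∧
      r = matOpNorm p (!![1, x; 0, 1] * T * !![1, -x; 0, 1])}, r ≤ M ^ 2 := by
    rintro r ⟨T, hT, rfl⟩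
    rw [matOpNorm_eq] at hT
    have e00 : ‖T 0 0‖ ≤ 1 := by rw [← hT]; exact (le_max_left _ _).trans (le_max_left _ _)
    have e10 : ‖T 1 0‖ ≤ 1 := by rw [← hT]; exact (le_max_right _ _).trans (le_max_left _ _)
    have e01 : ‖T 0 1‖ ≤ 1 := by rw [← hT]; exact (le_max_left _ _).trans (le_max_right _ _)
    have e11 : ‖T 1 1‖ ≤ 1 := by rw [← hT]; exact (le_max_right _ _).trans (le_max_right _ _)
    rw [conj_entries, matOpNorm_eq]
    have hA : ‖T 0 0 + x * T 1 0‖ ≤ M := qp_add_le p _ _ (e00.trans hM1)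
      (by simpa using qp_mul_le p x (T 1 0) hxM e10)
    apply max_le <;> apply max_le <;>
      simp only [Matrix.cons_val', Matrix.cons_val_zero, Matrix.cons_val_one,
        Matrix.head_cons, Matrix.head_fin_const, Matrix.empty_val',
        Matrix.cons_val_fin_one, Matrix.of_apply]
    · exact hA.trans hMM
    · exact e10.trans h1M
    · apply qp_add_le
      · have := qp_mul_le p (T 0 0 + x * T 1 0) (-x) hA (by simpa using hxM)
        calc ‖(T 0 0 + x * T 1 0) * (-x)‖ ≤ M * M := this
        _ ≤ M ^ 2 := by nlinarith
      · apply qp_add_le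
        · exact e01.trans h1M
        · have := qp_mul_le p x (T 1 1) hxM e11
          calc ‖x * T 1 1‖ ≤ M * 1 := this
          _ ≤ M ^ 2 := by nlinarith
    · apply qp_add_le
      · have := qp_mul_le p (T 1 0) (-x) e10 (by simpa using hxM)
        calc ‖T 1 0 * (-x)‖ ≤ 1 * M := this
        _ ≤ M ^ 2 := by nlinarith
      · exact e11.trans h1M
  have hmem : M ^ 2 ∈ {r : ℝ | ∃ T : Matrix (Fin 2) (Fin 2) ℚ_[p], matOpNorm p T = 1 ∧
      r = matOpNorm p (!![1, x; 0, 1] * T * !![1, -x; 0, 1])} := by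
    refine ⟨!![0, 0; 1, 0], ?_, ?_⟩
    · rw [matOpNorm_eq]; simp
    · have hC : !![(1:ℚ_[p]), x; 0, 1] * !![0, 0; 1, 0] * !![1, -x; 0, 1]
          = !![x, -(x*x); 1, -x] := by
        rw [conj_entries]
        norm_num
      rw [hC, matOpNorm_eq]
      simp only [Matrix.cons_val', Matrix.cons_val_zero, Matrix.cons_val_one,
        Matrix.head_cons, Matrix.head_fin_const, Matrix.empty_val',
        Matrix.cons_val_fin_one, Matrix.of_apply, norm_neg, norm_mul, norm_one]
      rcases le_total ‖x‖ 1 with h | h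
      · rw [max_eq_right h, max_eq_left (max_le (by nlinarith [norm_nonneg x]) h),
          hM, max_eq_left h, one_pow]
      · rw [max_eq_left h, max_eq_left (by nlinarith : ‖x‖ ≤ ‖x‖ * ‖x‖),
          max_eq_right (by nlinarith : ‖x‖ ≤ ‖x‖ * ‖x‖), hM, max_eq_right h]
        ring
  unfold adNorm
  exact le_antisymm (Real.sSup_le hub (by positivity)) (le_csSup ⟨_, hub⟩ hmem)

lemma entry_mul_le (A B : Matrix (Fin 2) (Fin 2) ℚ_[p]) {ra rb : ℝ}
    (hA : ∀ i j, ‖A i j‖ ≤ ra) (hB : ∀ i j, ‖B i j‖ ≤ rb) (i j : Fin 2) :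
    ‖(A * B) i j‖ ≤ ra * rb := by
  rw [Matrix.mul_apply, Fin.sum_univ_two]
  exact qp_add_le p _ _ (qp_mul_le p _ _ (hA i 0) (hB 0 j)) (qp_mul_le p _ _ (hA i 1) (hB 1 j))

/-- The constant `c = max(1, p^{−2t})² · ‖Ad n‖` of the effective Bruhat–Iwasawa
decomposition. -/
noncomputable def cConst (t : ℤ) (x : ℚ_[p]) : ℝ :=
  (max 1 ((p : ℝ) ^ (-(2 * t))))^2 * adNorm p x

/-- The neighborhood `O_ε = {g ∈ SL₂(ℚ_p) : all entries of g − I have norm ≤ ε}`. -/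
def congNbhdR (ε : ℝ) : Set (Matrix.SpecialLinearGroup (Fin 2) ℚ_[p]) :=
  {g | ∀ i j, ‖(g : Matrix (Fin 2) (Fin 2) ℚ_[p]) i j -
      (1 : Matrix (Fin 2) (Fin 2) ℚ_[p]) i j‖ ≤ ε}

/-- `Q_p`: the lower triangular matrices in `SL₂(ℤ_p)`, inside `SL₂(ℚ_p)`. -/
def lowerTriZp : Set (Matrix.SpecialLinearGroup (Fin 2) ℚ_[p]) :=
  {g | (g : Matrix (Fin 2) (Fin 2) ℚ_[p]) 0 1 = 0 ∧
    ∀ i j, ‖(g : Matrix (Fin 2) (Fin 2) ℚ_[p]) i j‖ ≤ 1}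

/-- `N_p`: the upper unipotent matrices in `SL₂(ℚ_p)`. -/
def upperUnip : Set (Matrix.SpecialLinearGroup (Fin 2) ℚ_[p]) :=
  {g | (g : Matrix (Fin 2) (Fin 2) ℚ_[p]) 0 0 = 1 ∧
    (g : Matrix (Fin 2) (Fin 2) ℚ_[p]) 1 1 = 1 ∧
    (g : Matrix (Fin 2) (Fin 2) ℚ_[p]) 1 0 = 0}

/-- The diagonal element `a = diag(p^{−t}, p^{t}) ∈ SL₂(ℚ_p)`. -/
noncomputable def aMat (t : ℤ) : Matrix.SpecialLinearGroup (Fin 2) ℚ_[p] :=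
  ⟨!![(p : ℚ_[p]) ^ (-t), 0; 0, (p : ℚ_[p]) ^ t], by
    have hp : (p : ℚ_[p]) ≠ 0 :=
      Nat.cast_ne_zero.mpr (Fact.out : p.Prime).ne_zero
    simp only [Matrix.det_fin_two_of, mul_zero, sub_zero, zero_mul, ← zpow_add₀ hp,
      neg_add_cancel, zpow_zero]⟩

/-- The upper unipotent element `n = [[1,x],[0,1]] ∈ SL₂(ℚ_p)`. -/
noncomputable def nMat (x : ℚ_[p]) : Matrix.SpecialLinearGroup (Fin 2) ℚ_[p] :=
  ⟨!![1, x; 0, 1], by simp [Matrix.det_fin_two_of]⟩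

set_option maxHeartbeats 2000000 in
/-- **Effective Bruhat–Iwasawa decomposition:** for `q ∈ Q_p`, `a = diag(p^{−t},p^{t})`,
`n = [[1,x],[0,1]]` and `c = max(1,p^{−2t})²·‖Ad n‖`, one has
`O_{p^{−N}} · qan · O_{p^{−N}} ⊆ q · O_{c·p^{−N}}^{Q_p} · a · O_{c·p^{−N}}^{N_p} · n`
whenever `c·p^{−N} < 1`; moreover `c` is bounded for `x` in a bounded set and `t`
bounded below. -/
theorem effective_bruhat_iwasawa_decomposition
    (q : Matrix.SpecialLinearGroup (Fin 2) ℚ_[p]) (hq : q ∈ lowerTriZp p)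
    (t : ℤ) (x : ℚ_[p]) (N : ℕ) (hN : 1 ≤ N)
    (hsmall : cConst p t x * (p : ℝ) ^ (-(N : ℤ)) < 1) :
    (congNbhdR p ((p : ℝ) ^ (-(N : ℤ))) * {q * aMat p t * nMat p x} *
        congNbhdR p ((p : ℝ) ^ (-(N : ℤ))) ⊆
      {q} * (congNbhdR p (cConst p t x * (p : ℝ) ^ (-(N : ℤ))) ∩ lowerTriZp p) *
        {aMat p t} *
        (congNbhdR p (cConst p t x * (p : ℝ) ^ (-(N : ℤ))) ∩ upperUnip p) * {nMat p x})
    ∧ (∀ (B : ℝ) (t₀ : ℤ), ∃ C : ℝ, ∀ (t' : ℤ) (x' : ℚ_[p]),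
        t₀ ≤ t' → ‖x'‖ ≤ B → cConst p t' x' ≤ C) := by
  have hp1 : (1:ℝ) < p := by exact_mod_cast (Fact.out : p.Prime).one_lt
  have hp0 : ((p:ℚ_[p])) ≠ 0 := Nat.cast_ne_zero.mpr (Fact.out : p.Prime).ne_zero
  set ε : ℝ := (p:ℝ) ^ (-(N:ℤ)) with hεdef
  have hε0 : 0 < ε := zpow_pos (by linarith) _
  have hε1 : ε ≤ 1 := zpow_le_one_of_nonpos₀ (le_of_lt hp1) (by omega)
  set M : ℝ := max 1 ‖x‖ with hMdef
  have hM1 : (1:ℝ) ≤ M := le_max_left _ _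
  set A : ℝ := M ^ 2 with hAdef
  have hA1 : (1:ℝ) ≤ A := by nlinarith
  set m : ℝ := max 1 ((p:ℝ) ^ (-(2*t))) with hmdef
  have hm1 : (1:ℝ) ≤ m := le_max_left _ _
  have hcC : cConst p t x = m ^ 2 * A := by rw [cConst, adNorm_eq]
  have hc1 : (1:ℝ) ≤ m ^ 2 * A := by nlinarith
  have hcε1 : m ^ 2 * A * ε < 1 := by rw [hcC] at hsmall; exact hsmall
  have hεcε : ε ≤ m ^ 2 * A * ε := by nlinarith
  have hcε0 : 0 ≤ m ^ 2 * A * ε := by nlinarith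
  have key : ∀ u v w : ℝ, 0 ≤ u → u ≤ ε → 0 ≤ v → v ≤ A → 0 ≤ w → w ≤ m →
      u * v * w ≤ m ^ 2 * A * ε := by
    intro u v w hu huε hv hvA hw hwm
    have h1 : u * v * w ≤ ε * A * m :=
      mul_le_mul (mul_le_mul huε hvA hv hε0.le) hwm hw
        (mul_nonneg hε0.le (by linarith))
    have h2 : ε * A * m ≤ m ^ 2 * A * ε := by
      calc ε * A * m = m * A * ε * 1 := by ring
      _ ≤ m * A * ε * m := mul_le_mul_of_nonneg_left hm1
          (mul_nonneg (mul_nonneg (by linarith) (by linarith)) hε0.le)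
      _ = m ^ 2 * A * ε := by ring
    linarith
  have hAεcε : A * ε ≤ m ^ 2 * A * ε := by
    calc A * ε = ε * A * 1 := by ring
    _ ≤ m ^ 2 * A * ε := key ε A 1 hε0.le le_rfl (by linarith) le_rfl zero_le_one (by linarith)
  constructor
  · rw [hcC]
    intro g hg
    obtain ⟨u, hu, g₂, hg₂, rfl⟩ := hg
    obtain ⟨g₁, hg₁, w, hw, rfl⟩ := hu
    rw [Set.mem_singleton_iff] at hw
    subst hw
    set aa := aMat p t with haa
    set nn := nMat p x with hnn
    set π : ℚ_[p] := (p:ℚ_[p]) ^ (-t) with hπ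
    set π' : ℚ_[p] := (p:ℚ_[p]) ^ t with hπ'
    have hππ' : π * π' = 1 := by
      rw [hπ, hπ', ← zpow_add₀ hp0, neg_add_cancel, zpow_zero]
    have hππ'2 : ‖π' * π'‖ ≤ m := by
      rw [norm_mul, hπ', Padic.norm_p_zpow, ← zpow_add₀ (by linarith : (p:ℝ) ≠ 0)]
      rw [show -t + -t = -(2*t) by ring]
      exact le_max_right _ _
    set h₁ := q⁻¹ * g₁ * q with hh₁def
    set h₂ := nn * g₂ * nn⁻¹ with hh₂def
    have hh₁ : ∀ i j, ‖((h₁ : Matrix (Fin 2) (Fin 2) ℚ_[p]) - 1) i j‖ ≤ ε := by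
      have hqq : ((q⁻¹ : Matrix.SpecialLinearGroup (Fin 2) ℚ_[p]) : Matrix (Fin 2) (Fin 2) ℚ_[p]) * ((q : Matrix.SpecialLinearGroup (Fin 2) ℚ_[p]) : Matrix (Fin 2) (Fin 2) ℚ_[p]) = 1 := by
        rw [← Matrix.SpecialLinearGroup.coe_mul, inv_mul_cancel,
          Matrix.SpecialLinearGroup.coe_one]
      have hid : ((h₁ : Matrix (Fin 2) (Fin 2) ℚ_[p]) - 1)
          = ((q⁻¹ : Matrix.SpecialLinearGroup (Fin 2) ℚ_[p]) : Matrix (Fin 2) (Fin 2) ℚ_[p]) * (((g₁ : Matrix.SpecialLinearGroup (Fin 2) ℚ_[p]) : Matrix (Fin 2) (Fin 2) ℚ_[p]) - 1) * ((q : Matrix.SpecialLinearGroup (Fin 2) ℚ_[p]) : Matrix (Fin 2) (Fin 2) ℚ_[p]) := by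
        rw [hh₁def, Matrix.SpecialLinearGroup.coe_mul, Matrix.SpecialLinearGroup.coe_mul,
          Matrix.mul_sub, Matrix.mul_one, Matrix.sub_mul, hqq]
      have hqi : ∀ i j, ‖((q⁻¹ : Matrix.SpecialLinearGroup (Fin 2) ℚ_[p]) : Matrix (Fin 2) (Fin 2) ℚ_[p]) i j‖ ≤ 1 := by
        intro i j
        rw [Matrix.SpecialLinearGroup.coe_inv, Matrix.adjugate_fin_two]
        fin_cases i <;> fin_cases j <;>
          simp [hq.2 0 0, hq.2 0 1, hq.2 1 0, hq.2 1 1]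
      have hE : ∀ i j, ‖(((g₁ : Matrix.SpecialLinearGroup (Fin 2) ℚ_[p]) : Matrix (Fin 2) (Fin 2) ℚ_[p]) - 1) i j‖ ≤ ε := by
        intro i j; rw [Matrix.sub_apply]; exact hg₁ i j
      intro i j
      rw [hid]
      have hb := entry_mul_le p _ _ (fun i j => entry_mul_le p _ _ hqi hE i j) hq.2 i j
      calc ‖(((q⁻¹ : Matrix.SpecialLinearGroup (Fin 2) ℚ_[p]) : Matrix (Fin 2) (Fin 2) ℚ_[p]) * (((g₁ : Matrix.SpecialLinearGroup (Fin 2) ℚ_[p]) : Matrix (Fin 2) (Fin 2) ℚ_[p]) - 1) * ((q : Matrix.SpecialLinearGroup (Fin 2) ℚ_[p]) : Matrix (Fin 2) (Fin 2) ℚ_[p])) i j‖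
          ≤ 1 * ε * 1 := hb
      _ = ε := by ring
    have hh₂ : ∀ i j, ‖((h₂ : Matrix (Fin 2) (Fin 2) ℚ_[p]) - 1) i j‖ ≤ A * ε := by
      have hnn' : ((nn⁻¹ : Matrix.SpecialLinearGroup (Fin 2) ℚ_[p]) : Matrix (Fin 2) (Fin 2) ℚ_[p]) * ((nn : Matrix.SpecialLinearGroup (Fin 2) ℚ_[p]) : Matrix (Fin 2) (Fin 2) ℚ_[p]) = 1 := by
        rw [← Matrix.SpecialLinearGroup.coe_mul, inv_mul_cancel,
          Matrix.SpecialLinearGroup.coe_one]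
      have hnn'' : ((nn : Matrix.SpecialLinearGroup (Fin 2) ℚ_[p]) : Matrix (Fin 2) (Fin 2) ℚ_[p]) * ((nn⁻¹ : Matrix.SpecialLinearGroup (Fin 2) ℚ_[p]) : Matrix (Fin 2) (Fin 2) ℚ_[p]) = 1 := by
        rw [← Matrix.SpecialLinearGroup.coe_mul, mul_inv_cancel,
          Matrix.SpecialLinearGroup.coe_one]
      have hid : ((h₂ : Matrix (Fin 2) (Fin 2) ℚ_[p]) - 1)
          = ((nn : Matrix.SpecialLinearGroup (Fin 2) ℚ_[p]) : Matrix (Fin 2) (Fin 2) ℚ_[p]) * (((g₂ : Matrix.SpecialLinearGroup (Fin 2) ℚ_[p]) : Matrix (Fin 2) (Fin 2) ℚ_[p]) - 1) * ((nn⁻¹ : Matrix.SpecialLinearGroup (Fin 2) ℚ_[p]) : Matrix (Fin 2) (Fin 2) ℚ_[p]) := by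
        rw [hh₂def, Matrix.SpecialLinearGroup.coe_mul, Matrix.SpecialLinearGroup.coe_mul,
          Matrix.mul_sub, Matrix.mul_one, Matrix.sub_mul, hnn'']
      have hnb : ∀ i j, ‖((nn : Matrix.SpecialLinearGroup (Fin 2) ℚ_[p]) : Matrix (Fin 2) (Fin 2) ℚ_[p]) i j‖ ≤ M := by
        intro i j
        rw [hnn]
        have : (↑(nMat p x) : Matrix (Fin 2) (Fin 2) ℚ_[p]) = !![1, x; 0, 1] := rfl
        rw [this]
        fin_cases i <;> fin_cases j <;> simp
        · exact hM1
        · rw [hMdef]; exact le_max_right _ _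
        · linarith
        · exact hM1
      have hnib : ∀ i j, ‖((nn⁻¹ : Matrix.SpecialLinearGroup (Fin 2) ℚ_[p]) : Matrix (Fin 2) (Fin 2) ℚ_[p]) i j‖ ≤ M := by
        intro i j
        rw [Matrix.SpecialLinearGroup.coe_inv]
        have : (((nn : Matrix.SpecialLinearGroup (Fin 2) ℚ_[p]) : Matrix (Fin 2) (Fin 2) ℚ_[p])).adjugate = !![1, -x; 0, 1] := by
          rw [hnn]
          have h2 : (↑(nMat p x) : Matrix (Fin 2) (Fin 2) ℚ_[p]) = !![1, x; 0, 1] := rfl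
          rw [h2, Matrix.adjugate_fin_two]
          ext i j
          fin_cases i <;> fin_cases j <;> simp
        rw [this]
        fin_cases i <;> fin_cases j <;> simp
        · exact hM1
        · rw [hMdef]; exact le_max_right _ _
        · linarith
        · exact hM1
      have hF : ∀ i j, ‖(((g₂ : Matrix.SpecialLinearGroup (Fin 2) ℚ_[p]) : Matrix (Fin 2) (Fin 2) ℚ_[p]) - 1) i j‖ ≤ ε := by
        intro i j; rw [Matrix.sub_apply]; exact hg₂ i j
      intro i j
      rw [hid]
      have hb := entry_mul_le p _ _ (fun i j => entry_mul_le p _ _ hnb hF i j) hnib i j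
      calc ‖(((nn : Matrix.SpecialLinearGroup (Fin 2) ℚ_[p]) : Matrix (Fin 2) (Fin 2) ℚ_[p]) * (((g₂ : Matrix.SpecialLinearGroup (Fin 2) ℚ_[p]) : Matrix (Fin 2) (Fin 2) ℚ_[p]) - 1) * ((nn⁻¹ : Matrix.SpecialLinearGroup (Fin 2) ℚ_[p]) : Matrix (Fin 2) (Fin 2) ℚ_[p])) i j‖
          ≤ M * ε * M := hb
      _ = A * ε := by rw [hAdef]; ring
    set b00 := (h₁ : Matrix (Fin 2) (Fin 2) ℚ_[p]) 0 0 with hb00d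
    set b01 := (h₁ : Matrix (Fin 2) (Fin 2) ℚ_[p]) 0 1 with hb01d
    set b10 := (h₁ : Matrix (Fin 2) (Fin 2) ℚ_[p]) 1 0 with hb10d
    set b11 := (h₁ : Matrix (Fin 2) (Fin 2) ℚ_[p]) 1 1 with hb11d
    set c00 := (h₂ : Matrix (Fin 2) (Fin 2) ℚ_[p]) 0 0 with hc00d
    set c01 := (h₂ : Matrix (Fin 2) (Fin 2) ℚ_[p]) 0 1 with hc01d
    set c10 := (h₂ : Matrix (Fin 2) (Fin 2) ℚ_[p]) 1 0 with hc10d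
    set c11 := (h₂ : Matrix (Fin 2) (Fin 2) ℚ_[p]) 1 1 with hc11d
    have hb00 : ‖b00 - 1‖ ≤ ε := by simpa [Matrix.sub_apply, Matrix.one_apply] using hh₁ 0 0
    have hb01 : ‖b01‖ ≤ ε := by simpa [Matrix.sub_apply, Matrix.one_apply] using hh₁ 0 1
    have hb10 : ‖b10‖ ≤ ε := by simpa [Matrix.sub_apply, Matrix.one_apply] using hh₁ 1 0
    have hb11 : ‖b11 - 1‖ ≤ ε := by simpa [Matrix.sub_apply, Matrix.one_apply] using hh₁ 1 1
    have hc00 : ‖c00 - 1‖ ≤ A * ε := by simpa [Matrix.sub_apply, Matrix.one_apply] using hh₂ 0 0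
    have hc01 : ‖c01‖ ≤ A * ε := by simpa [Matrix.sub_apply, Matrix.one_apply] using hh₂ 0 1
    have hc10 : ‖c10‖ ≤ A * ε := by simpa [Matrix.sub_apply, Matrix.one_apply] using hh₂ 1 0
    have hc11 : ‖c11 - 1‖ ≤ A * ε := by simpa [Matrix.sub_apply, Matrix.one_apply] using hh₂ 1 1
    have hb00n : ‖b00‖ = 1 := qp_norm_one_of p _ (lt_of_le_of_lt (hb00.trans hεcε) hcε1)
    have hb11n : ‖b11‖ = 1 := qp_norm_one_of p _ (lt_of_le_of_lt (hb11.trans hεcε) hcε1)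
    have hc00n : ‖c00‖ = 1 := qp_norm_one_of p _ (lt_of_le_of_lt (hc00.trans hAεcε) hcε1)
    have hc11n : ‖c11‖ = 1 := qp_norm_one_of p _ (lt_of_le_of_lt (hc11.trans hAεcε) hcε1)
    set K : ℚ_[p] := b00 * c00 + b01 * c10 * (π' * π') with hKdef
    set K10 : ℚ_[p] := b10 * c00 + b11 * c10 * (π' * π') with hK10def
    set K01 : ℚ_[p] := b00 * c01 + b01 * c11 * (π' * π') with hK01def
    have hKb : ‖K - 1‖ ≤ m ^ 2 * A * ε := by
      have he : K - 1 = (b00 - 1) + ((c00 - 1) + ((b00 - 1) * (c00 - 1) + b01 * c10 * (π' * π'))) := by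
        rw [hKdef]; ring
      rw [he]
      refine qp_add_le p _ _ (hb00.trans hεcε) (qp_add_le p _ _ (hc00.trans hAεcε)
        (qp_add_le p _ _ ?_ ?_))
      · have := qp_mul_le p _ _ hb00 hc00
        calc ‖(b00-1)*(c00-1)‖ ≤ ε * (A * ε) := this
        _ = ε * A * ε := by ring
        _ ≤ m ^ 2 * A * ε := key ε A ε hε0.le le_rfl (by linarith) le_rfl hε0.le (by linarith)
      · have := qp_mul_le p _ _ (qp_mul_le p _ _ hb01 hc10) hππ'2
        calc ‖b01 * c10 * (π' * π')‖ ≤ ε * (A * ε) * m := this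
        _ = ε * A * (ε * m) := by ring
        _ ≤ m ^ 2 * A * ε := by
            refine key ε A (ε * m) hε0.le le_rfl (by linarith) le_rfl
              (mul_nonneg hε0.le (by linarith)) ?_
            calc ε * m ≤ 1 * m := mul_le_mul_of_nonneg_right hε1 (by linarith)
            _ = m := one_mul m
    have hK10b : ‖K10‖ ≤ m ^ 2 * A * ε := by
      refine qp_add_le p _ _ ?_ ?_
      · have := qp_mul_le p _ _ hb10 (le_of_eq hc00n)
        calc ‖b10 * c00‖ ≤ ε * 1 := this
        _ = ε := mul_one ε
        _ ≤ m ^ 2 * A * ε := hεcε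
      · have := qp_mul_le p _ _ (qp_mul_le p _ _ (le_of_eq hb11n) hc10) hππ'2
        calc ‖b11 * c10 * (π' * π')‖ ≤ 1 * (A * ε) * m := this
        _ = ε * A * m := by ring
        _ ≤ m ^ 2 * A * ε := key ε A m hε0.le le_rfl (by linarith) le_rfl (by linarith) le_rfl
    have hK01b : ‖K01‖ ≤ m ^ 2 * A * ε := by
      refine qp_add_le p _ _ ?_ ?_
      · have := qp_mul_le p _ _ (le_of_eq hb00n) hc01
        calc ‖b00 * c01‖ ≤ 1 * (A * ε) := this
        _ = A * ε := one_mul _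
        _ ≤ m ^ 2 * A * ε := hAεcε
      · have := qp_mul_le p _ _ (qp_mul_le p _ _ hb01 (le_of_eq hc11n)) hππ'2
        calc ‖b01 * c11 * (π' * π')‖ ≤ ε * 1 * m := this
        _ ≤ m ^ 2 * A * ε := key ε 1 m hε0.le le_rfl zero_le_one (by linarith) (by linarith) le_rfl
    have hKn : ‖K‖ = 1 := qp_norm_one_of p _ (lt_of_le_of_lt hKb hcε1)
    have hK0 : K ≠ 0 := by
      intro h; rw [h, norm_zero] at hKn; linarith
    have hKin : ‖K⁻¹‖ = 1 := by rw [norm_inv, hKn]; norm_num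
    set q' : Matrix.SpecialLinearGroup (Fin 2) ℚ_[p] :=
      ⟨!![K, 0; K10, K⁻¹], by simp [Matrix.det_fin_two_of, mul_inv_cancel₀ hK0]⟩ with hq'def
    set n' : Matrix.SpecialLinearGroup (Fin 2) ℚ_[p] :=
      ⟨!![1, K01 * K⁻¹; 0, 1], by simp [Matrix.det_fin_two_of]⟩ with hn'def
    have hKi1 : ‖K⁻¹ - 1‖ ≤ m ^ 2 * A * ε := by
      have hiden : K⁻¹ - 1 = (1 - K) * K⁻¹ := by field_simp
      rw [hiden, norm_mul, hKin, mul_one, norm_sub_rev]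
      exact hKb
    have hq'mem : q' ∈ congNbhdR p (m ^ 2 * A * ε) ∩ lowerTriZp p := by
      constructor
      · intro i j
        rw [hq'def]
        fin_cases i <;> fin_cases j
        · simpa [Matrix.one_apply] using hKb
        · simpa [Matrix.one_apply] using hcε0
        · simpa [Matrix.one_apply] using hK10b
        · simpa [Matrix.one_apply] using hKi1
      · refine ⟨?_, ?_⟩
        · rw [hq'def]; simp
        · intro i j
          rw [hq'def]
          fin_cases i <;> fin_cases j
          · simpa using le_of_eq hKn
          · simp
          · simpa using hK10b.trans (le_of_lt hcε1)
          · simpa using le_of_eq hKin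
    have hK01K : ‖K01 * K⁻¹‖ ≤ m ^ 2 * A * ε := by
      rw [norm_mul, hKin, mul_one]
      exact hK01b
    have hn'mem : n' ∈ congNbhdR p (m ^ 2 * A * ε) ∩ upperUnip p := by
      constructor
      · intro i j
        rw [hn'def]
        fin_cases i <;> fin_cases j
        · simpa [Matrix.one_apply] using hcε0
        · simpa [Matrix.one_apply] using hK01K
        · simpa [Matrix.one_apply] using hcε0
        · simpa [Matrix.one_apply] using hcε0
      · refine ⟨?_, ?_, ?_⟩ <;> rw [hn'def] <;> simp
    have hkey : q' * aa * n' = h₁ * aa * h₂ := by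
      have hπ0 : π ≠ 0 := by rw [hπ]; exact zpow_ne_zero _ hp0
      have hKK : K * K⁻¹ = 1 := mul_inv_cancel₀ hK0
      have haam : ((aa : Matrix.SpecialLinearGroup (Fin 2) ℚ_[p]) : Matrix (Fin 2) (Fin 2) ℚ_[p]) = !![π, 0; 0, π'] := rfl
      have e00 : ((q' * aa * n' : Matrix.SpecialLinearGroup (Fin 2) ℚ_[p]) : Matrix (Fin 2) (Fin 2) ℚ_[p]) 0 0
          = ((h₁ * aa * h₂ : Matrix.SpecialLinearGroup (Fin 2) ℚ_[p]) : Matrix (Fin 2) (Fin 2) ℚ_[p]) 0 0 := by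
        simp only [Matrix.SpecialLinearGroup.coe_mul]
        rw [haam]
        simp [Matrix.mul_apply, Fin.sum_univ_two, hq'def, hn'def]
        simp only [← hb00d, ← hb01d, ← hc00d, ← hc10d]
        linear_combination π * hKdef + (b01 * c10 * π') * hππ'
      have e01 : ((q' * aa * n' : Matrix.SpecialLinearGroup (Fin 2) ℚ_[p]) : Matrix (Fin 2) (Fin 2) ℚ_[p]) 0 1
          = ((h₁ * aa * h₂ : Matrix.SpecialLinearGroup (Fin 2) ℚ_[p]) : Matrix (Fin 2) (Fin 2) ℚ_[p]) 0 1 := by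
        simp only [Matrix.SpecialLinearGroup.coe_mul]
        rw [haam]
        simp [Matrix.mul_apply, Fin.sum_univ_two, hq'def, hn'def]
        simp only [← hb00d, ← hb01d, ← hc01d, ← hc11d]
        linear_combination (π * K01) * hKK + π * hK01def + (b01 * c11 * π') * hππ'
      have e10 : ((q' * aa * n' : Matrix.SpecialLinearGroup (Fin 2) ℚ_[p]) : Matrix (Fin 2) (Fin 2) ℚ_[p]) 1 0
          = ((h₁ * aa * h₂ : Matrix.SpecialLinearGroup (Fin 2) ℚ_[p]) : Matrix (Fin 2) (Fin 2) ℚ_[p]) 1 0 := by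
        simp only [Matrix.SpecialLinearGroup.coe_mul]
        rw [haam]
        simp [Matrix.mul_apply, Fin.sum_univ_two, hq'def, hn'def]
        simp only [← hb10d, ← hb11d, ← hc00d, ← hc10d]
        linear_combination π * hK10def + (b11 * c10 * π') * hππ'
      have hL00 : ((q' * aa * n' : Matrix.SpecialLinearGroup (Fin 2) ℚ_[p]) : Matrix (Fin 2) (Fin 2) ℚ_[p]) 0 0 = K * π := by
        simp only [Matrix.SpecialLinearGroup.coe_mul]
        rw [haam]
        simp [Matrix.mul_apply, Fin.sum_univ_two, hq'def, hn'def]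
      have hR00 : ((h₁ * aa * h₂ : Matrix.SpecialLinearGroup (Fin 2) ℚ_[p]) : Matrix (Fin 2) (Fin 2) ℚ_[p]) 0 0 ≠ 0 := by
        rw [← e00, hL00]
        exact mul_ne_zero hK0 hπ0
      have hdL : ((q' * aa * n' : Matrix.SpecialLinearGroup (Fin 2) ℚ_[p]) : Matrix (Fin 2) (Fin 2) ℚ_[p]).det = 1 :=
        Matrix.SpecialLinearGroup.det_coe _
      have hdR : ((h₁ * aa * h₂ : Matrix.SpecialLinearGroup (Fin 2) ℚ_[p]) : Matrix (Fin 2) (Fin 2) ℚ_[p]).det = 1 :=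
        Matrix.SpecialLinearGroup.det_coe _
      rw [Matrix.det_fin_two] at hdL hdR
      have e11 : ((q' * aa * n' : Matrix.SpecialLinearGroup (Fin 2) ℚ_[p]) : Matrix (Fin 2) (Fin 2) ℚ_[p]) 1 1
          = ((h₁ * aa * h₂ : Matrix.SpecialLinearGroup (Fin 2) ℚ_[p]) : Matrix (Fin 2) (Fin 2) ℚ_[p]) 1 1 := by
        refine mul_left_cancel₀ hR00 ?_
        linear_combination hdL - hdR
          - ((q' * aa * n' : Matrix.SpecialLinearGroup (Fin 2) ℚ_[p]) : Matrix (Fin 2) (Fin 2) ℚ_[p]) 1 1 * e00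
          + ((q' * aa * n' : Matrix.SpecialLinearGroup (Fin 2) ℚ_[p]) : Matrix (Fin 2) (Fin 2) ℚ_[p]) 1 0 * e01
          + ((h₁ * aa * h₂ : Matrix.SpecialLinearGroup (Fin 2) ℚ_[p]) : Matrix (Fin 2) (Fin 2) ℚ_[p]) 0 1 * e10
      apply Subtype.ext
      ext i j
      fin_cases i <;> fin_cases j
      · exact e00
      · exact e01
      · exact e10
      · exact e11
    have hfinal : g₁ * (q * aa * nn) * g₂ = q * q' * aa * n' * nn := by
      have h1 : q * q' * aa * n' * nn = q * (q' * aa * n') * nn := by group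
      rw [h1, hkey, hh₁def, hh₂def]
      group
    beta_reduce
    rw [hfinal]
    exact Set.mul_mem_mul (Set.mul_mem_mul (Set.mul_mem_mul (Set.mul_mem_mul
      (Set.mem_singleton q) hq'mem) (Set.mem_singleton aa)) hn'mem) (Set.mem_singleton nn)
  · intro B t₀
    refine ⟨(max 1 ((p:ℝ) ^ (-(2*t₀)))) ^ 2 * (max 1 B) ^ 2, ?_⟩
    intro t' x' ht hx
    rw [cConst, adNorm_eq]
    have h1 : max 1 ((p:ℝ) ^ (-(2*t'))) ≤ max 1 ((p:ℝ) ^ (-(2*t₀))) :=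
      max_le_max (le_refl _) (zpow_le_zpow_right₀ (le_of_lt hp1) (by omega))
    have h2 : max 1 ‖x'‖ ≤ max 1 B := max_le_max (le_refl _) hx
    have h10 : (0:ℝ) ≤ max 1 ((p:ℝ) ^ (-(2*t'))) := le_trans zero_le_one (le_max_left _ _)
    have h20 : (0:ℝ) ≤ max 1 ‖x'‖ := le_trans zero_le_one (le_max_left _ _)
    exact mul_le_mul (pow_le_pow_left₀ h10 h1 2) (pow_le_pow_left₀ h20 h2 2)
      (by positivity) (by positivity)
end

section
/- Let p be a prime. Fix an integer k ≥ 1, θ ∈ ℤ_p^× × ℤ_p, Θ_p = θ + p^k ℤ_p², ψ ∈ ℤ, α ∈ ℚ_p, and t₀ ∈ ℤ. For integers t₁ ≤ t₂ define B_{t₁,t₂} = { q · diag(p^{−t}, p^{t}) · [[1, β],[0,1]] : q ∈ Q_p with first column in Θ_p, t ∈ ℤ with t₁ ≤ t ≤ t₂, β ∈ α + p^ψ ℤ_p } ⊆ SL₂(ℚ_p). Then there exists an integer N₀ such that for every N ≥ N₀ and all t₁, t₂ with t₀ ≤ t₁ ≤ t₂: O_{p^{−N}} · B_{t₁,t₂}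 · O_{p^{−N}} = B_{t₁,t₂}. In particular the family {B_{t₁,t₂}} is Lipschitz well-rounded with Lipschitz constant zero. -/
open Pointwise

variable (p : ℕ) [Fact p.Prime]

/-- The congruence neighborhood `O_{p^{−N}} = {g ∈ SL₂(ℚ_p) : g − I ∈ p^N Mat₂(ℤ_p)}`. -/
def congNbhd (N : ℕ) : Set (Matrix.SpecialLinearGroup (Fin 2) ℚ_[p]) :=
  {g | ∀ i j, ‖(g : Matrix (Fin 2) (Fin 2) ℚ_[p]) i j -
      (1 : Matrix (Fin 2) (Fin 2) ℚ_[p]) i j‖ ≤ (p : ℝ) ^ (-(N : ℤ))}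

/-- The set `B_{t₁,t₂} = Q_{Θ_p} · A_{t₁,t₂} · N_{α+p^ψ ℤ_p} ⊆ SL₂(ℚ_p)`:
products `q · diag(p^{−t}, p^{t}) · [[1,β],[0,1]]` where `q = [[u,0],[m,u⁻¹]] ∈ Q_p`
has first column `(u,m)` in the arc `θ + p^k ℤ_p²`, `t₁ ≤ t ≤ t₂`, and
`β ∈ α + p^ψ ℤ_p`. -/
def bruhatBox (θ : ℚ_[p] × ℚ_[p]) (k : ℕ) (α : ℚ_[p]) (ψ : ℤ) (t₁ t₂ : ℤ) :
    Set (Matrix.SpecialLinearGroup (Fin 2) ℚ_[p]) :=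
  {g | ∃ (u m β : ℚ_[p]) (t : ℤ),
    ‖u‖ = 1 ∧ ‖m‖ ≤ 1 ∧
    ‖u - θ.1‖ ≤ (p : ℝ) ^ (-(k : ℤ)) ∧ ‖m - θ.2‖ ≤ (p : ℝ) ^ (-(k : ℤ)) ∧
    t₁ ≤ t ∧ t ≤ t₂ ∧ ‖β - α‖ ≤ (p : ℝ) ^ (-ψ) ∧
    (g : Matrix (Fin 2) (Fin 2) ℚ_[p]) =
      !![u, 0; m, u⁻¹] * !![(p : ℚ_[p]) ^ (-t), 0; 0, (p : ℚ_[p]) ^ t] *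
        !![1, β; 0, 1]}

variable {p}

private lemma BB.tri {x y : ℚ_[p]} {r : ℝ} (hx : ‖x‖ ≤ r) (hy : ‖y‖ ≤ r) : ‖x + y‖ ≤ r :=
  le_trans (Padic.nonarchimedean x y) (max_le hx hy)

private lemma BB.tri' {x y : ℚ_[p]} {r : ℝ} (hx : ‖x‖ ≤ r) (hy : ‖y‖ ≤ r) : ‖x - y‖ ≤ r := by
  rw [sub_eq_add_neg]; exact BB.tri hx (by simpa using hy)

private lemma BB.norm_eq_of_sub_lt {x y : ℚ_[p]} (h : ‖x - y‖ < ‖y‖) : ‖x‖ = ‖y‖ := by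
  have h1 : ‖x‖ ≤ ‖y‖ := by
    have := BB.tri (le_of_lt h) (le_refl ‖y‖)
    simpa using this
  rcases lt_or_eq_of_le h1 with h2 | h2
  · exfalso
    have : ‖y‖ ≤ max ‖x‖ ‖x - y‖ := by
      have := Padic.nonarchimedean x (y - x)
      simpa [norm_sub_rev x y] using this
    rcases max_cases ‖x‖ ‖x - y‖ with ⟨he, _⟩ | ⟨he, _⟩ <;> rw [he] at this <;> linarith
  · exact h2

private lemma BB.prod_eq' (u m β P : ℚ_[p]) :
    !![u, 0; m, u⁻¹] * !![P⁻¹, 0; 0, P] * !![1, β; 0, 1] =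
    !![u * P⁻¹, u * P⁻¹ * β; m * P⁻¹, m * P⁻¹ * β + u⁻¹ * P] := by
  ext i j
  fin_cases i <;> fin_cases j <;>
    simp [Matrix.mul_apply, Fin.sum_univ_succ]

private lemma BB.entries_ext {a b c d a' b' c' d' : ℚ_[p]} (h1 : a = a') (h2 : b = b')
    (h3 : c = c') (h4 : d = d') : !![a,b;c,d] = !![a',b';c',d'] := by
  rw [h1, h2, h3, h4]

private lemma BB.left_mul_matrix (u m β w00 w01 w10 w11 P : ℚ_[p])
    (hu : u ≠ 0) (hP : P ≠ 0) (hu' : w00*u + w01*m ≠ 0)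
    (hdet : w00*w11 - w01*w10 = 1) :
    !![w00, w01; w10, w11] *
      (!![u, 0; m, u⁻¹] * !![P⁻¹, 0; 0, P] * !![1, β; 0, 1]) =
    !![w00*u + w01*m, 0; w10*u + w11*m, (w00*u + w01*m)⁻¹] * !![P⁻¹, 0; 0, P] *
      !![1, β + w01 * (w00*u + w01*m)⁻¹ * u⁻¹ * P^2; 0, 1] := by
  rw [BB.prod_eq', BB.prod_eq', Matrix.mul_fin_two]
  refine BB.entries_ext ?_ ?_ ?_ ?_
  · field_simp
  · field_simp; ring
  · field_simp
  · have hu'' : u*w00 + m*w01 ≠ 0 := by rwa [mul_comm u, mul_comm m]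
    field_simp
    linear_combination u*P^2 * hdet

private lemma BB.right_mul_matrix (u m β v00 v01 v10 v11 P : ℚ_[p])
    (hu : u ≠ 0) (hP : P ≠ 0) (hs : v00 + β*v10 ≠ 0)
    (hdet : v00*v11 - v01*v10 = 1) :
    (!![u, 0; m, u⁻¹] * !![P⁻¹, 0; 0, P] * !![1, β; 0, 1]) * !![v00, v01; v10, v11] =
    !![u*(v00 + β*v10), 0; m*(v00 + β*v10) + u⁻¹*P^2*v10, (u*(v00 + β*v10))⁻¹] *
      !![P⁻¹, 0; 0, P] * !![1, (v01 + β*v11)*(v00 + β*v10)⁻¹; 0, 1] := by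
  rw [BB.prod_eq', BB.prod_eq', Matrix.mul_fin_two]
  refine BB.entries_ext ?_ ?_ ?_ ?_
  · field_simp
  · field_simp
  · field_simp; ring
  · field_simp
    linear_combination P^2 * hdet

private lemma BB.congNbhd_entries {N : ℕ} {w : Matrix.SpecialLinearGroup (Fin 2) ℚ_[p]}
    (hw : w ∈ congNbhd p N) :
    ‖(w : Matrix (Fin 2) (Fin 2) ℚ_[p]) 0 0 - 1‖ ≤ (p:ℝ)^(-(N:ℤ)) ∧
    ‖(w : Matrix (Fin 2) (Fin 2) ℚ_[p]) 0 1‖ ≤ (p:ℝ)^(-(N:ℤ)) ∧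
    ‖(w : Matrix (Fin 2) (Fin 2) ℚ_[p]) 1 0‖ ≤ (p:ℝ)^(-(N:ℤ)) ∧
    ‖(w : Matrix (Fin 2) (Fin 2) ℚ_[p]) 1 1 - 1‖ ≤ (p:ℝ)^(-(N:ℤ)) := by
  refine ⟨?_, ?_, ?_, ?_⟩
  · simpa [Matrix.one_apply] using hw 0 0
  · simpa [Matrix.one_apply] using hw 0 1
  · simpa [Matrix.one_apply] using hw 1 0
  · simpa [Matrix.one_apply] using hw 1 1

private lemma BB.det_entries (w : Matrix.SpecialLinearGroup (Fin 2) ℚ_[p]) :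
    (w : Matrix (Fin 2) (Fin 2) ℚ_[p]) 0 0 * (w : Matrix (Fin 2) (Fin 2) ℚ_[p]) 1 1 -
    (w : Matrix (Fin 2) (Fin 2) ℚ_[p]) 0 1 * (w : Matrix (Fin 2) (Fin 2) ℚ_[p]) 1 0 = 1 := by
  have := w.2
  rwa [Matrix.det_fin_two] at this

private lemma BB.step_left {k : ℕ} {θ : ℚ_[p] × ℚ_[p]} {α : ℚ_[p]} {ψ t₀ t₁ t₂ : ℤ} {N : ℕ}
    (hεk : (p:ℝ)^(-(N:ℤ)) ≤ (p:ℝ)^(-(k:ℤ)))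
    (hε1 : (p:ℝ)^(-(N:ℤ)) < 1)
    (hεψ : (p:ℝ)^(-(N:ℤ)) * ((p:ℝ)^(-t₀))^2 ≤ (p:ℝ)^(-ψ))
    (ht₀ : t₀ ≤ t₁)
    {w g : Matrix.SpecialLinearGroup (Fin 2) ℚ_[p]}
    (hw : w ∈ congNbhd p N) (hg : g ∈ bruhatBox p θ k α ψ t₁ t₂) :
    w * g ∈ bruhatBox p θ k α ψ t₁ t₂ := by
  obtain ⟨u, m, β, t, hu, hm, huθ, hmθ, ht1, ht2, hβ, hgeq⟩ := hg
  obtain ⟨hw00, hw01, hw10, hw11⟩ := BB.congNbhd_entries hw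
  have hdet := BB.det_entries w
  have hp1 : (1:ℝ) < p := by exact_mod_cast (Fact.out : p.Prime).one_lt
  have hpq : (p:ℚ_[p]) ≠ 0 := by exact_mod_cast (Fact.out : p.Prime).ne_zero
  have hP : (p:ℚ_[p])^t ≠ 0 := zpow_ne_zero _ hpq
  have hu0 : u ≠ 0 := by intro h; rw [h] at hu; simp at hu
  have hε0 : (0:ℝ) ≤ (p:ℝ)^(-(N:ℤ)) := by positivity
  set ε : ℝ := (p:ℝ)^(-(N:ℤ))
  set w00 := (w : Matrix (Fin 2) (Fin 2) ℚ_[p]) 0 0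
  set w01 := (w : Matrix (Fin 2) (Fin 2) ℚ_[p]) 0 1
  set w10 := (w : Matrix (Fin 2) (Fin 2) ℚ_[p]) 1 0
  set w11 := (w : Matrix (Fin 2) (Fin 2) ℚ_[p]) 1 1
  have hu'u : ‖(w00 * u + w01 * m) - u‖ ≤ ε := by
    have heq : (w00 * u + w01 * m) - u = (w00 - 1) * u + w01 * m := by ring
    rw [heq]
    refine BB.tri ?_ ?_
    · rw [norm_mul, hu, mul_one]; exact hw00
    · calc ‖w01 * m‖ = ‖w01‖ * ‖m‖ := norm_mul _ _
        _ ≤ ε * 1 := mul_le_mul hw01 hm (norm_nonneg _) hε0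
        _ = ε := mul_one _
  have hu' : ‖w00 * u + w01 * m‖ = 1 := by
    rw [← hu]
    exact BB.norm_eq_of_sub_lt (by rw [hu]; exact lt_of_le_of_lt hu'u hε1)
  have hu'0 : w00 * u + w01 * m ≠ 0 := by
    intro h; rw [h] at hu'; simp at hu'
  have hm'm : ‖(w10 * u + w11 * m) - m‖ ≤ ε := by
    have heq : (w10 * u + w11 * m) - m = w10 * u + (w11 - 1) * m := by ring
    rw [heq]
    refine BB.tri ?_ ?_
    · rw [norm_mul, hu, mul_one]; exact hw10
    · calc ‖(w11 - 1) * m‖ = ‖w11 - 1‖ * ‖m‖ := norm_mul _ _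
        _ ≤ ε * 1 := mul_le_mul hw11 hm (norm_nonneg _) hε0
        _ = ε := mul_one _
  have hβ'β : ‖w01 * (w00 * u + w01 * m)⁻¹ * u⁻¹ * ((p:ℚ_[p])^t)^2‖ ≤ ε * ((p:ℝ)^(-t₀))^2 := by
    rw [norm_mul, norm_mul, norm_mul, norm_inv, norm_inv, hu, hu', norm_pow,
      Padic.norm_p_zpow]
    simp only [inv_one, mul_one]
    refine mul_le_mul hw01 ?_ (by positivity) hε0
    have h1 : (p:ℝ)^(-t) ≤ (p:ℝ)^(-t₀) :=
      zpow_le_zpow_right₀ (le_of_lt hp1) (by omega)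
    exact pow_le_pow_left₀ (by positivity) h1 2
  refine ⟨w00 * u + w01 * m, w10 * u + w11 * m,
    β + w01 * (w00 * u + w01 * m)⁻¹ * u⁻¹ * ((p:ℚ_[p])^t)^2, t, hu', ?_, ?_, ?_,
    ht1, ht2, ?_, ?_⟩
  · have heq : w10 * u + w11 * m = ((w10 * u + w11 * m) - m) + m := by ring
    rw [heq]; exact BB.tri (le_trans hm'm (le_of_lt hε1)) hm
  · have heq : (w00 * u + w01 * m) - θ.1 = ((w00 * u + w01 * m) - u) + (u - θ.1) := by ring
    rw [heq]; exact BB.tri (le_trans hu'u hεk) huθ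
  · have heq : (w10 * u + w11 * m) - θ.2 = ((w10 * u + w11 * m) - m) + (m - θ.2) := by ring
    rw [heq]; exact BB.tri (le_trans hm'm hεk) hmθ
  · have heq : (β + w01 * (w00 * u + w01 * m)⁻¹ * u⁻¹ * ((p:ℚ_[p])^t)^2) - α =
      (w01 * (w00 * u + w01 * m)⁻¹ * u⁻¹ * ((p:ℚ_[p])^t)^2) + (β - α) := by ring
    rw [heq]; exact BB.tri (le_trans hβ'β hεψ) hβ
  · rw [Matrix.SpecialLinearGroup.coe_mul, hgeq,
      Matrix.eta_fin_two (w : Matrix (Fin 2) (Fin 2) ℚ_[p]), zpow_neg]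
    exact BB.left_mul_matrix u m β w00 w01 w10 w11 _ hu0 hP hu'0 hdet

private lemma BB.step_right {k : ℕ} {θ : ℚ_[p] × ℚ_[p]} {α : ℚ_[p]} {ψ t₀ t₁ t₂ : ℤ} {N : ℕ}
    (hεkC : (p:ℝ)^(-(N:ℤ)) * max 1 (max ‖α‖ ((p:ℝ)^(-ψ))) ≤ (p:ℝ)^(-(k:ℤ)))
    (hεkP : (p:ℝ)^(-(N:ℤ)) * ((p:ℝ)^(-t₀))^2 ≤ (p:ℝ)^(-(k:ℤ)))
    (hεψ : (p:ℝ)^(-(N:ℤ)) * (max 1 (max ‖α‖ ((p:ℝ)^(-ψ))))^2 ≤ (p:ℝ)^(-ψ))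
    (hk1 : (p:ℝ)^(-(k:ℤ)) < 1)
    (ht₀ : t₀ ≤ t₁)
    {g v : Matrix.SpecialLinearGroup (Fin 2) ℚ_[p]}
    (hv : v ∈ congNbhd p N) (hg : g ∈ bruhatBox p θ k α ψ t₁ t₂) :
    g * v ∈ bruhatBox p θ k α ψ t₁ t₂ := by
  obtain ⟨u, m, β, t, hu, hm, huθ, hmθ, ht1, ht2, hβ, hgeq⟩ := hg
  obtain ⟨hv00, hv01, hv10, hv11⟩ := BB.congNbhd_entries hv
  have hdet := BB.det_entries v
  have hp1 : (1:ℝ) < p := by exact_mod_cast (Fact.out : p.Prime).one_lt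
  have hpq : (p:ℚ_[p]) ≠ 0 := by exact_mod_cast (Fact.out : p.Prime).ne_zero
  have hP : (p:ℚ_[p])^t ≠ 0 := zpow_ne_zero _ hpq
  have hu0 : u ≠ 0 := by intro h; rw [h] at hu; simp at hu
  have hε0 : (0:ℝ) ≤ (p:ℝ)^(-(N:ℤ)) := by positivity
  set ε : ℝ := (p:ℝ)^(-(N:ℤ))
  set C : ℝ := max 1 (max ‖α‖ ((p:ℝ)^(-ψ))) with hCdef
  have hC1 : (1:ℝ) ≤ C := le_max_left _ _
  have hC0 : (0:ℝ) ≤ C := le_trans zero_le_one hC1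
  have hεC : ε ≤ ε * C := le_mul_of_one_le_right hε0 hC1
  have hεC1 : ε * C < 1 := lt_of_le_of_lt hεkC hk1
  set v00 := (v : Matrix (Fin 2) (Fin 2) ℚ_[p]) 0 0
  set v01 := (v : Matrix (Fin 2) (Fin 2) ℚ_[p]) 0 1
  set v10 := (v : Matrix (Fin 2) (Fin 2) ℚ_[p]) 1 0
  set v11 := (v : Matrix (Fin 2) (Fin 2) ℚ_[p]) 1 1
  have hβC : ‖β‖ ≤ C := by
    have heq : β = (β - α) + α := by ring
    rw [heq]
    refine BB.tri (le_trans hβ ?_) ?_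
    · exact le_trans (le_max_right _ _) (le_max_right _ _)
    · exact le_trans (le_max_left _ _) (le_max_right _ _)
  have hs1 : ‖(v00 + β * v10) - 1‖ ≤ ε * C := by
    have heq : (v00 + β * v10) - 1 = (v00 - 1) + β * v10 := by ring
    rw [heq]
    refine BB.tri (le_trans hv00 hεC) ?_
    calc ‖β * v10‖ = ‖β‖ * ‖v10‖ := norm_mul _ _
      _ ≤ C * ε := mul_le_mul hβC hv10 (norm_nonneg _) hC0
      _ = ε * C := mul_comm _ _
  have hs : ‖v00 + β * v10‖ = 1 := by
    have := BB.norm_eq_of_sub_lt (x := v00 + β * v10) (y := 1)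
      (by rw [norm_one]; exact lt_of_le_of_lt hs1 hεC1)
    simpa using this
  have hs0 : v00 + β * v10 ≠ 0 := by intro h; rw [h] at hs; simp at hs
  have hus0 : u * (v00 + β * v10) ≠ 0 := mul_ne_zero hu0 hs0
  have hu'' : ‖u * (v00 + β * v10)‖ = 1 := by rw [norm_mul, hu, hs, mul_one]
  have hu''u : ‖u * (v00 + β * v10) - u‖ ≤ ε * C := by
    have heq : u * (v00 + β * v10) - u = u * ((v00 + β * v10) - 1) := by ring
    rw [heq, norm_mul, hu, one_mul]; exact hs1
  have hm''m : ‖(m * (v00 + β * v10) + u⁻¹ * ((p:ℚ_[p])^t)^2 * v10) - m‖ ≤ (p:ℝ)^(-(k:ℤ)) := by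
    have heq : (m * (v00 + β * v10) + u⁻¹ * ((p:ℚ_[p])^t)^2 * v10) - m =
      m * ((v00 + β * v10) - 1) + u⁻¹ * ((p:ℚ_[p])^t)^2 * v10 := by ring
    rw [heq]
    refine BB.tri ?_ ?_
    · calc ‖m * ((v00 + β * v10) - 1)‖ = ‖m‖ * ‖(v00 + β * v10) - 1‖ := norm_mul _ _
        _ ≤ 1 * (ε * C) := mul_le_mul hm hs1 (norm_nonneg _) zero_le_one
        _ = ε * C := one_mul _
        _ ≤ _ := hεkC
    · have e1 : ‖u⁻¹ * ((p:ℚ_[p])^t)^2 * v10‖ = ((p:ℝ)^(-t))^2 * ‖v10‖ := by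
        rw [norm_mul, norm_mul, norm_inv, hu, inv_one, one_mul, norm_pow,
          Padic.norm_p_zpow]
      have e2 : ((p:ℝ)^(-t))^2 * ‖v10‖ ≤ ((p:ℝ)^(-t₀))^2 * ε := by
        refine mul_le_mul ?_ hv10 (norm_nonneg _) (by positivity)
        exact pow_le_pow_left₀ (by positivity)
          (zpow_le_zpow_right₀ (le_of_lt hp1) (by omega)) 2
      rw [e1]
      exact le_trans e2 (le_trans (le_of_eq (mul_comm _ _)) hεkP)
  have hβ''β : ‖(v01 + β * v11) * (v00 + β * v10)⁻¹ - β‖ ≤ ε * C^2 := by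
    have heq : (v01 + β * v11) * (v00 + β * v10)⁻¹ - β =
        (v01 + β * (v11 - v00) - β^2 * v10) * (v00 + β * v10)⁻¹ := by
      field_simp; ring
    rw [heq, norm_mul, norm_inv, hs, inv_one, mul_one]
    have h1 : ε ≤ ε * C^2 := le_mul_of_one_le_right hε0 (one_le_pow₀ hC1)
    refine BB.tri' (BB.tri ?_ ?_) ?_
    · exact le_trans hv01 h1
    · calc ‖β * (v11 - v00)‖ = ‖β‖ * ‖v11 - v00‖ := norm_mul _ _
        _ ≤ C * ε := by
          refine mul_le_mul hβC ?_ (norm_nonneg _) hC0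
          have heq2 : v11 - v00 = (v11 - 1) - (v00 - 1) := by ring
          rw [heq2]; exact BB.tri' hv11 hv00
        _ = ε * C := mul_comm _ _
        _ ≤ ε * C^2 := by nlinarith
    · calc ‖β^2 * v10‖ = ‖β‖^2 * ‖v10‖ := by rw [norm_mul, norm_pow]
        _ ≤ C^2 * ε := by
          refine mul_le_mul (pow_le_pow_left₀ (norm_nonneg _) hβC 2) hv10
            (norm_nonneg _) (by positivity)
        _ = ε * C^2 := mul_comm _ _
  refine ⟨u * (v00 + β * v10), m * (v00 + β * v10) + u⁻¹ * ((p:ℚ_[p])^t)^2 * v10,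
    (v01 + β * v11) * (v00 + β * v10)⁻¹, t, hu'', ?_, ?_, ?_, ht1, ht2, ?_, ?_⟩
  · have heq : m * (v00 + β * v10) + u⁻¹ * ((p:ℚ_[p])^t)^2 * v10 =
      ((m * (v00 + β * v10) + u⁻¹ * ((p:ℚ_[p])^t)^2 * v10) - m) + m := by ring
    rw [heq]; exact BB.tri (le_trans hm''m (le_of_lt hk1)) hm
  · have heq : u * (v00 + β * v10) - θ.1 = (u * (v00 + β * v10) - u) + (u - θ.1) := by ring
    rw [heq]; exact BB.tri (le_trans hu''u hεkC) huθ
  · have heq : (m * (v00 + β * v10) + u⁻¹ * ((p:ℚ_[p])^t)^2 * v10) - θ.2 =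
      ((m * (v00 + β * v10) + u⁻¹ * ((p:ℚ_[p])^t)^2 * v10) - m) + (m - θ.2) := by ring
    rw [heq]; exact BB.tri hm''m hmθ
  · have heq : (v01 + β * v11) * (v00 + β * v10)⁻¹ - α =
      ((v01 + β * v11) * (v00 + β * v10)⁻¹ - β) + (β - α) := by ring
    rw [heq]; exact BB.tri (le_trans hβ''β hεψ) hβ
  · rw [Matrix.SpecialLinearGroup.coe_mul, hgeq,
      Matrix.eta_fin_two (v : Matrix (Fin 2) (Fin 2) ℚ_[p]), zpow_neg]
    exact BB.right_mul_matrix u m β v00 v01 v10 v11 _ hu0 hP hs0 hdet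

variable (p)

/-- **The Bruhat boxes `B_{t₁,t₂}` are Lipschitz well-rounded with Lipschitz constant
zero:** there is `N₀` such that for all `N ≥ N₀` and all `t₀ ≤ t₁ ≤ t₂`,
`O_{p^{−N}} · B_{t₁,t₂} · O_{p^{−N}} = B_{t₁,t₂}`. -/
theorem bruhatBox_well_rounded
    (k : ℕ) (hk : 1 ≤ k) (θ : ℚ_[p] × ℚ_[p]) (hθ1 : ‖θ.1‖ = 1) (hθ2 : ‖θ.2‖ ≤ 1)
    (α : ℚ_[p]) (ψ : ℤ) (t₀ : ℤ) :
    ∃ N₀ : ℕ, ∀ N : ℕ, N₀ ≤ N → ∀ t₁ t₂ : ℤ, t₀ ≤ t₁ → t₁ ≤ t₂ →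
      congNbhd p N * bruhatBox p θ k α ψ t₁ t₂ * congNbhd p N =
        bruhatBox p θ k α ψ t₁ t₂ := by
  have hp1 : (1:ℝ) < p := by exact_mod_cast (Fact.out : p.Prime).one_lt
  set C : ℝ := max 1 (max ‖α‖ ((p:ℝ)^(-ψ))) with hCdef
  have hC1 : (1:ℝ) ≤ C := le_max_left _ _
  set D : ℝ := C^2 + ((p:ℝ)^(-t₀))^2 with hDdef
  have hD1 : (1:ℝ) ≤ D := by
    have h1 : (1:ℝ) ≤ C^2 := one_le_pow₀ hC1
    have h2 : (0:ℝ) ≤ ((p:ℝ)^(-t₀))^2 := by positivity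
    linarith
  have hD0 : (0:ℝ) < D := lt_of_lt_of_le zero_lt_one hD1
  set E : ℝ := min ((p:ℝ)^(-(k:ℤ))) ((p:ℝ)^(-ψ)) with hEdef
  have hE0 : (0:ℝ) < E := lt_min (by positivity) (by positivity)
  have hk1 : (p:ℝ)^(-(k:ℤ)) < 1 := by
    have : (p:ℝ)^(-(k:ℤ)) ≤ (p:ℝ)^(-1:ℤ) :=
      zpow_le_zpow_right₀ (le_of_lt hp1) (by omega)
    calc (p:ℝ)^(-(k:ℤ)) ≤ (p:ℝ)^(-1:ℤ) := this
      _ = (p:ℝ)⁻¹ := zpow_neg_one _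
      _ < 1 := by rw [inv_lt_one_iff₀]; right; exact hp1
  obtain ⟨N₀, hN₀⟩ := exists_pow_lt_of_lt_one (div_pos hE0 hD0)
    (show (p:ℝ)⁻¹ < 1 by rw [inv_lt_one_iff₀]; right; exact hp1)
  refine ⟨N₀, fun N hN t₁ t₂ ht₀ ht₁₂ => ?_⟩
  have hεE : (p:ℝ)^(-(N:ℤ)) * D ≤ E := by
    have h1 : (p:ℝ)^(-(N:ℤ)) ≤ (p:ℝ)^(-(N₀:ℤ)) :=
      zpow_le_zpow_right₀ (le_of_lt hp1) (by omega)
    have h2 : (p:ℝ)^(-(N₀:ℤ)) = ((p:ℝ)⁻¹)^N₀ := by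
      rw [zpow_neg, inv_pow, zpow_natCast]
    have h3 : (p:ℝ)^(-(N:ℤ)) < E / D := lt_of_le_of_lt (h2 ▸ h1) (hN₀)
    calc (p:ℝ)^(-(N:ℤ)) * D ≤ (E / D) * D := by
          refine mul_le_mul_of_nonneg_right (le_of_lt h3) (le_of_lt hD0)
      _ = E := div_mul_cancel₀ _ (ne_of_gt hD0)
  have hε0 : (0:ℝ) ≤ (p:ℝ)^(-(N:ℤ)) := by positivity
  have hεD : ∀ x : ℝ, 0 ≤ x → x ≤ D → (p:ℝ)^(-(N:ℤ)) * x ≤ E := fun x hx hxD =>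
    le_trans (mul_le_mul_of_nonneg_left hxD hε0) hεE
  have hEk : E ≤ (p:ℝ)^(-(k:ℤ)) := min_le_left _ _
  have hEψ : E ≤ (p:ℝ)^(-ψ) := min_le_right _ _
  have hCD : C ≤ D := by
    have h1 : C ≤ C^2 := le_self_pow₀ hC1 (by norm_num)
    have h2 : (0:ℝ) ≤ ((p:ℝ)^(-t₀))^2 := by positivity
    linarith
  have hC2D : C^2 ≤ D := by
    have h2 : (0:ℝ) ≤ ((p:ℝ)^(-t₀))^2 := by positivity
    linarith [hDdef]
  have hPD : ((p:ℝ)^(-t₀))^2 ≤ D := by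
    have h1 : (0:ℝ) ≤ C^2 := by positivity
    linarith [hDdef]
  have hC0 : (0:ℝ) ≤ C := le_trans zero_le_one hC1
  -- hypotheses for step lemmas
  have hεk : (p:ℝ)^(-(N:ℤ)) ≤ (p:ℝ)^(-(k:ℤ)) := by
    have := hεD 1 zero_le_one hD1
    rw [mul_one] at this
    exact le_trans this hEk
  have hε1 : (p:ℝ)^(-(N:ℤ)) < 1 := lt_of_le_of_lt hεk hk1
  have hεψP : (p:ℝ)^(-(N:ℤ)) * ((p:ℝ)^(-t₀))^2 ≤ (p:ℝ)^(-ψ) :=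
    le_trans (hεD _ (by positivity) hPD) hEψ
  have hεkC : (p:ℝ)^(-(N:ℤ)) * C ≤ (p:ℝ)^(-(k:ℤ)) :=
    le_trans (hεD _ hC0 hCD) hEk
  have hεkP : (p:ℝ)^(-(N:ℤ)) * ((p:ℝ)^(-t₀))^2 ≤ (p:ℝ)^(-(k:ℤ)) :=
    le_trans (hεD _ (by positivity) hPD) hEk
  have hεψC : (p:ℝ)^(-(N:ℤ)) * C^2 ≤ (p:ℝ)^(-ψ) :=
    le_trans (hεD _ (by positivity) hC2D) hEψ
  have hone : (1 : Matrix.SpecialLinearGroup (Fin 2) ℚ_[p]) ∈ congNbhd p N := by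
    intro i j
    simp only [Matrix.SpecialLinearGroup.coe_one, sub_self, norm_zero]
    positivity
  apply Set.eq_of_subset_of_subset
  · rintro x hx
    obtain ⟨y, hy, v, hv, rfl⟩ := Set.mem_mul.mp hx
    obtain ⟨w, hw, g, hg, rfl⟩ := Set.mem_mul.mp hy
    exact BB.step_right hεkC hεkP hεψC hk1 ht₀ hv
      (BB.step_left hεk hε1 hεψP ht₀ hw hg)
  · intro x hx
    have := Set.mul_mem_mul (Set.mul_mem_mul hone hx) hone
    simpa using this
end

section
/- Let p be a prime and let μ be a Haar measure on the locally compact group SL₂(ℚ_p). Then the complement of the big Bruhat cell, i.e. the set {g ∈ SL₂(ℚ_p) : g₁₁ = 0} of matrices whose top-left entry vanishes, has μ-measure zero. -/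
open MeasureTheory

noncomputable instance (p : ℕ) [Fact p.Prime] : MeasurableSpace ℚ_[p] := borel _
instance (p : ℕ) [Fact p.Prime] : BorelSpace ℚ_[p] := ⟨rfl⟩

noncomputable instance (p : ℕ) [Fact p.Prime] :
    MeasurableSpace (Matrix (Fin 2) (Fin 2) ℚ_[p]) :=
  inferInstanceAs (MeasurableSpace (Fin 2 → Fin 2 → ℚ_[p]))

noncomputable instance (p : ℕ) [Fact p.Prime] :
    MeasurableSpace (Matrix.SpecialLinearGroup (Fin 2) ℚ_[p]) :=
  inferInstanceAs (MeasurableSpace {A : Matrix (Fin 2) (Fin 2) ℚ_[p] // A.det = 1})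

instance (p : ℕ) [Fact p.Prime] :
    TopologicalSpace (Matrix.SpecialLinearGroup (Fin 2) ℚ_[p]) :=
  inferInstanceAs (TopologicalSpace {A : Matrix (Fin 2) (Fin 2) ℚ_[p] // A.det = 1})

/- Auxiliary instances and lemmas -/

instance (p : ℕ) [Fact p.Prime] : BorelSpace (Matrix (Fin 2) (Fin 2) ℚ_[p]) :=
  inferInstanceAs (BorelSpace (Fin 2 → Fin 2 → ℚ_[p]))

instance (p : ℕ) [Fact p.Prime] : BorelSpace (Matrix.SpecialLinearGroup (Fin 2) ℚ_[p]) :=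
  Subtype.borelSpace {A : Matrix (Fin 2) (Fin 2) ℚ_[p] | A.det = 1}

instance (p : ℕ) [Fact p.Prime] : ContinuousMul (Matrix.SpecialLinearGroup (Fin 2) ℚ_[p]) := by
  constructor
  apply Continuous.subtype_mk
  exact continuous_fst.subtype_val.matrix_mul continuous_snd.subtype_val

namespace BruhatAux

variable {p : ℕ} [Fact p.Prime]

/-- Upper unipotent matrix in `SL₂(ℚ_p)`. -/
noncomputable def u (t : ℚ_[p]) : Matrix.SpecialLinearGroup (Fin 2) ℚ_[p] :=
  ⟨!![1, t; 0, 1], by simp [Matrix.det_fin_two_of]⟩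

lemma u_mul_row0 (s : ℚ_[p]) (g : Matrix.SpecialLinearGroup (Fin 2) ℚ_[p]) (j : Fin 2) :
    ((u s * g : Matrix.SpecialLinearGroup (Fin 2) ℚ_[p]) : Matrix (Fin 2) (Fin 2) ℚ_[p]) 0 j
      = (g : Matrix (Fin 2) (Fin 2) ℚ_[p]) 0 j + s * (g : Matrix (Fin 2) (Fin 2) ℚ_[p]) 1 j := by
  rw [Matrix.SpecialLinearGroup.coe_mul]
  simp [u, Matrix.mul_apply, Fin.sum_univ_two]

lemma u_mul_row1 (s : ℚ_[p]) (g : Matrix.SpecialLinearGroup (Fin 2) ℚ_[p]) (j : Fin 2) :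
    ((u s * g : Matrix.SpecialLinearGroup (Fin 2) ℚ_[p]) : Matrix (Fin 2) (Fin 2) ℚ_[p]) 1 j
      = (g : Matrix (Fin 2) (Fin 2) ℚ_[p]) 1 j := by
  rw [Matrix.SpecialLinearGroup.coe_mul]
  simp [u, Matrix.mul_apply, Fin.sum_univ_two]

lemma norm_natCast_le_one (k : ℕ) : ‖((k : ℚ_[p]))‖ ≤ 1 := by
  have : ((k : ℤ) : ℚ_[p]) = (k : ℚ_[p]) := by push_cast; ring
  rw [← this]
  exact Padic.norm_int_le_one _

lemma entry_measurable (i j : Fin 2) :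
    Measurable fun g : Matrix.SpecialLinearGroup (Fin 2) ℚ_[p] =>
      (g : Matrix (Fin 2) (Fin 2) ℚ_[p]) i j :=
  (measurable_pi_apply j).comp ((measurable_pi_apply i).comp measurable_subtype_coe)

/-- The bounded piece of `SL₂(ℚ_p)`. -/
def B (r : ℝ) : Set (Matrix.SpecialLinearGroup (Fin 2) ℚ_[p]) :=
  {g | ∀ i j, ‖(g : Matrix (Fin 2) (Fin 2) ℚ_[p]) i j‖ ≤ r}

lemma B_measurable (r : ℝ) : MeasurableSet (B (p := p) r) := by
  have : B (p := p) r = ⋂ i, ⋂ j,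
      {g : Matrix.SpecialLinearGroup (Fin 2) ℚ_[p] |
        ‖(g : Matrix (Fin 2) (Fin 2) ℚ_[p]) i j‖ ≤ r} := by
    ext g; simp [B, Set.mem_iInter]
  rw [this]
  exact MeasurableSet.iInter fun i => MeasurableSet.iInter fun j =>
    measurableSet_le (entry_measurable i j).norm measurable_const

lemma B_compact (r : ℝ) : IsCompact (B (p := p) r) := by
  have hM : IsCompact {A : Fin 2 → Fin 2 → ℚ_[p] | ∀ i j, ‖A i j‖ ≤ r} := by
    have h : {A : Fin 2 → Fin 2 → ℚ_[p] | ∀ i j, ‖A i j‖ ≤ r}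
        = Set.univ.pi (fun _ : Fin 2 => Set.univ.pi fun _ : Fin 2 =>
            Metric.closedBall (0 : ℚ_[p]) r) := by
      ext A
      simp [Set.mem_pi, Metric.mem_closedBall, dist_zero_right]
    rw [h]
    exact isCompact_univ_pi fun _ => isCompact_univ_pi fun _ =>
      ProperSpace.isCompact_closedBall _ _
  have hclosed : IsClosed {A : Matrix (Fin 2) (Fin 2) ℚ_[p] | A.det = 1} :=
    isClosed_eq (Continuous.matrix_det continuous_id) continuous_const
  have hemb := Topology.IsClosedEmbedding.subtypeVal hclosed
  exact hemb.isCompact_preimage hM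

end BruhatAux

open BruhatAux

/-- **The complement of the big Bruhat cell is Haar-null:** for any Haar measure `μ` on
`SL₂(ℚ_p)`, the set of matrices whose top-left entry vanishes has measure zero. -/
theorem complement_big_bruhat_cell_null
    (p : ℕ) [Fact p.Prime]
    (μ : Measure (Matrix.SpecialLinearGroup (Fin 2) ℚ_[p]))
    [μ.IsHaarMeasure] :
    μ {g : Matrix.SpecialLinearGroup (Fin 2) ℚ_[p] |
        (g : Matrix (Fin 2) (Fin 2) ℚ_[p]) 0 0 = 0} = 0 := by
  classical
  set Z : Set (Matrix.SpecialLinearGroup (Fin 2) ℚ_[p]) :=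
    {g | (g : Matrix (Fin 2) (Fin 2) ℚ_[p]) 0 0 = 0} with hZdef
  have hmeasZ : MeasurableSet Z :=
    (entry_measurable 0 0) (measurableSet_singleton (0 : ℚ_[p]))
  have key : ∀ r : ℝ, μ (Z ∩ B r) = 0 := by
    intro r
    set W : Set (Matrix.SpecialLinearGroup (Fin 2) ℚ_[p]) := Z ∩ B r with hWdef
    have hWmeas : MeasurableSet W := hmeasZ.inter (B_measurable r)
    set S : ℕ → Set (Matrix.SpecialLinearGroup (Fin 2) ℚ_[p]) :=
      fun k => (fun g => u (-(k : ℚ_[p])) * g) ⁻¹' W with hSdef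
    have hSmeas : ∀ k, MeasurableSet (S k) :=
      fun k => hWmeas.preimage (measurable_const_mul _)
    have hSμ : ∀ k, μ (S k) = μ W := fun k => measure_preimage_mul μ _ W
    -- key entry computations for `g ∈ S k`
    have hmem00 : ∀ (k : ℕ) (g : Matrix.SpecialLinearGroup (Fin 2) ℚ_[p]), g ∈ S k →
        (g : Matrix (Fin 2) (Fin 2) ℚ_[p]) 0 0
          = (k : ℚ_[p]) * (g : Matrix (Fin 2) (Fin 2) ℚ_[p]) 1 0 := by
      intro k g hg
      have h0 : ((u (-(k : ℚ_[p])) * g :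
          Matrix.SpecialLinearGroup (Fin 2) ℚ_[p]) : Matrix (Fin 2) (Fin 2) ℚ_[p]) 0 0 = 0 :=
        hg.1
      rw [u_mul_row0] at h0
      linear_combination h0
    -- disjointness
    have hdisj : Pairwise (Function.onFun Disjoint S) := by
      intro k l hkl
      refine Set.disjoint_left.mpr fun g hk hl => ?_
      have h1 := hmem00 k g hk
      have h2 := hmem00 l g hl
      have hne : ((k : ℚ_[p])) ≠ (l : ℚ_[p]) := by
        exact_mod_cast hkl
      have hg10 : (g : Matrix (Fin 2) (Fin 2) ℚ_[p]) 1 0 = 0 := by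
        have hsub : ((k : ℚ_[p]) - l) * (g : Matrix (Fin 2) (Fin 2) ℚ_[p]) 1 0 = 0 := by
          linear_combination h2 - h1
        rcases mul_eq_zero.1 hsub with h | h
        · exact absurd (sub_eq_zero.1 h) hne
        · exact h
      have hg00 : (g : Matrix (Fin 2) (Fin 2) ℚ_[p]) 0 0 = 0 := by
        rw [h1, hg10, mul_zero]
      have hdet := g.prop
      rw [Matrix.det_fin_two, hg00, hg10] at hdet
      simp at hdet
    -- all the translates live in a fixed compact set
    have hsub : ∀ k, S k ⊆ B (r + r) := by
      intro k g hg
      have hb : ∀ i j, ‖((u (-(k : ℚ_[p])) * g :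
          Matrix.SpecialLinearGroup (Fin 2) ℚ_[p]) : Matrix (Fin 2) (Fin 2) ℚ_[p]) i j‖ ≤ r :=
        hg.2
      intro i j
      have h1j : (g : Matrix (Fin 2) (Fin 2) ℚ_[p]) 1 j
          = ((u (-(k : ℚ_[p])) * g :
              Matrix.SpecialLinearGroup (Fin 2) ℚ_[p]) : Matrix (Fin 2) (Fin 2) ℚ_[p]) 1 j :=
        (u_mul_row1 _ _ _).symm
      have hb1 : ‖(g : Matrix (Fin 2) (Fin 2) ℚ_[p]) 1 j‖ ≤ r := by rw [h1j]; exact hb 1 j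
      have hr : 0 ≤ r := le_trans (norm_nonneg _) hb1
      fin_cases i
      · -- row 0
        have h0j : (g : Matrix (Fin 2) (Fin 2) ℚ_[p]) 0 j
            = ((u (-(k : ℚ_[p])) * g :
                Matrix.SpecialLinearGroup (Fin 2) ℚ_[p]) : Matrix (Fin 2) (Fin 2) ℚ_[p]) 0 j
              + (k : ℚ_[p]) * (g : Matrix (Fin 2) (Fin 2) ℚ_[p]) 1 j := by
          rw [u_mul_row0]; ring
        calc ‖(g : Matrix (Fin 2) (Fin 2) ℚ_[p]) 0 j‖
            ≤ ‖((u (-(k : ℚ_[p])) * g :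
                Matrix.SpecialLinearGroup (Fin 2) ℚ_[p]) : Matrix (Fin 2) (Fin 2) ℚ_[p]) 0 j‖
              + ‖(k : ℚ_[p]) * (g : Matrix (Fin 2) (Fin 2) ℚ_[p]) 1 j‖ := by
              rw [h0j]; exact norm_add_le _ _
          _ ≤ r + r := by
              refine add_le_add (hb 0 j) ?_
              rw [norm_mul]
              calc ‖((k : ℕ) : ℚ_[p])‖ * ‖(g : Matrix (Fin 2) (Fin 2) ℚ_[p]) 1 j‖
                  ≤ 1 * r :=
                    mul_le_mul (norm_natCast_le_one k) hb1 (norm_nonneg _) zero_le_one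
                _ = r := one_mul r
      · -- row 1
        exact le_trans hb1 (by linarith)
    -- conclude
    by_contra hne
    have hU : (⋃ k, S k) ⊆ B (r + r) := Set.iUnion_subset hsub
    have hUeq : μ (⋃ k, S k) = ∑' k : ℕ, μ (S k) := measure_iUnion hdisj hSmeas
    have htop : ∑' _ : ℕ, μ W = ⊤ := ENNReal.tsum_const_eq_top_of_ne_zero hne
    have hlt : μ (B (r + r)) < ⊤ := (B_compact (r + r)).measure_lt_top
    have hle : μ (⋃ k, S k) ≤ μ (B (r + r)) := measure_mono hU
    rw [hUeq] at hle
    simp only [hSμ] at hle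
    rw [htop] at hle
    exact absurd (lt_of_le_of_lt hle hlt) (lt_irrefl _)
  -- cover Z by countably many bounded pieces
  have hcover : Z ⊆ ⋃ n : ℕ, Z ∩ B n := by
    intro g hg
    obtain ⟨n, hn⟩ := exists_nat_ge
      (‖(g : Matrix (Fin 2) (Fin 2) ℚ_[p]) 0 0‖ + ‖(g : Matrix (Fin 2) (Fin 2) ℚ_[p]) 0 1‖
        + ‖(g : Matrix (Fin 2) (Fin 2) ℚ_[p]) 1 0‖ + ‖(g : Matrix (Fin 2) (Fin 2) ℚ_[p]) 1 1‖)
    refine Set.mem_iUnion.mpr ⟨n, hg, ?_⟩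
    have h00 := norm_nonneg ((g : Matrix (Fin 2) (Fin 2) ℚ_[p]) 0 0)
    have h01 := norm_nonneg ((g : Matrix (Fin 2) (Fin 2) ℚ_[p]) 0 1)
    have h10 := norm_nonneg ((g : Matrix (Fin 2) (Fin 2) ℚ_[p]) 1 0)
    have h11 := norm_nonneg ((g : Matrix (Fin 2) (Fin 2) ℚ_[p]) 1 1)
    show ∀ i j, ‖(g : Matrix (Fin 2) (Fin 2) ℚ_[p]) i j‖ ≤ (n : ℝ)
    simp only [Fin.forall_fin_two]
    refine ⟨⟨?_, ?_⟩, ?_, ?_⟩ <;> linarith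
  exact measure_mono_null hcover (measure_iUnion_null fun n => key n)
end
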